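/- arXiv:1907.07268 — 6 statements merged into one kernel-verified Lean document; each statement's English description precedes it below -/
import Mathlib

section
/- Fix integers k ≥ 1 and s ≥ 0 and a partition μ. For an integer n ≥ |μ| + μ_1, let A(n) be the set of pairs (T, ν) where T is a standard Young tableau of shape μ[n] with des(T) ≤ k − 1, ν is a partition with at most k − des(T) − 1 parts, each part of size at most n − k, and maj(T) + |ν| = s. Then |A(n)| = |A(n+1)| for every integer n with n > max(2s, s + k) and n ≥ |μ| + μ_1. (This is the combinatorial core of Theorem 1.5(1): for fixed k and homological degree d = 2s, the multiplicity of the irreducible S_n-module indexed by μ[n] in H_d(X_{n,k}) equals |A(n)|, so these multiplicities stabilize.) -/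
/-- The cells of the padded partition `μ[n] = (n - |μ|, μ₁, μ₂, …)`:
the first row has `n - |μ|` boxes, and row `i+1` is row `i` of `μ`. -/
def paddedCells (μ : YoungDiagram) (n : ℕ) : Finset (ℕ × ℕ) :=
  ((Finset.range (n - μ.card)).image fun j => ((0 : ℕ), j)) ∪
    (μ.cells.image fun c => (c.1 + 1, c.2))

/-- `T` is a standard Young tableau filling of the cell set `cells`:
it restricts to a bijection from the cells onto `{1, …, #cells}`,
is strictly increasing along rows and down columns, and is `0` off the cells. -/
structure IsSYT (cells : Finset (ℕ × ℕ)) (T : ℕ × ℕ → ℕ) : Prop where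
  bijOn : Set.BijOn T ↑cells (Set.Icc 1 cells.card)
  row_strict : ∀ c1 ∈ cells, ∀ c2 ∈ cells, c1.1 = c2.1 → c1.2 < c2.2 → T c1 < T c2
  col_strict : ∀ c1 ∈ cells, ∀ c2 ∈ cells, c1.2 = c2.2 → c1.1 < c2.1 → T c1 < T c2
  zeros : ∀ c, c ∉ cells → T c = 0

open Classical in
/-- The descent set of a filling: those `i` such that `i` appears in a row strictly
above (smaller row index than) the row containing `i + 1`. -/
noncomputable def descents (cells : Finset (ℕ × ℕ)) (T : ℕ × ℕ → ℕ) : Finset ℕ :=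
  (Finset.range (cells.card + 1)).filter fun i =>
    ∃ c1 ∈ cells, ∃ c2 ∈ cells, T c1 = i ∧ T c2 = i + 1 ∧ c1.1 < c2.1

/-- `des T`, the number of descents. -/
noncomputable def desN (cells : Finset (ℕ × ℕ)) (T : ℕ × ℕ → ℕ) : ℕ :=
  (descents cells T).card

/-- `maj T`, the sum of the descents. -/
noncomputable def majN (cells : Finset (ℕ × ℕ)) (T : ℕ × ℕ → ℕ) : ℕ :=
  ∑ i ∈ descents cells T, i

namespace Aux

lemma mem_paddedCells {μ : YoungDiagram} {n : ℕ} {c : ℕ × ℕ} :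
    c ∈ paddedCells μ n ↔ (c.1 = 0 ∧ c.2 < n - μ.card) ∨ (0 < c.1 ∧ (c.1 - 1, c.2) ∈ μ) := by
  obtain ⟨a, b⟩ := c
  unfold paddedCells
  simp only [Finset.mem_union, Finset.mem_image, Finset.mem_range, YoungDiagram.mem_cells,
    Prod.mk.injEq]
  constructor
  · rintro (⟨j, hj, h0, rfl⟩ | ⟨⟨x, y⟩, hxy, rfl, rfl⟩)
    · exact Or.inl ⟨h0.symm, by omega⟩
    · exact Or.inr ⟨Nat.succ_pos x, by simpa using hxy⟩
  · rintro (⟨rfl, hj⟩ | ⟨hpos, hmem⟩)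
    · exact Or.inl ⟨b, hj, rfl, rfl⟩
    · exact Or.inr ⟨(a - 1, b), hmem, by omega, rfl⟩

lemma card_paddedCells {μ : YoungDiagram} {n : ℕ} (h : μ.card ≤ n) :
    (paddedCells μ n).card = n := by
  unfold paddedCells
  rw [Finset.card_union_of_disjoint, Finset.card_image_of_injective _ (fun x y hxy => by
      simpa using hxy),
    Finset.card_image_of_injective _ (fun x y hxy => by
      obtain ⟨x1, x2⟩ := x; obtain ⟨y1, y2⟩ := y
      simpa [Prod.ext_iff] using hxy), Finset.card_range]
  · have : μ.cells.card = μ.card := rfl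
    omega
  · rw [Finset.disjoint_left]
    rintro ⟨a, b⟩ h1 h2
    simp only [Finset.mem_image, Finset.mem_range, Prod.mk.injEq] at h1 h2
    obtain ⟨j, _, h0, _⟩ := h1
    obtain ⟨x, _, hx, _⟩ := h2
    omega

lemma paddedCells_succ {μ : YoungDiagram} {n : ℕ} (h : μ.card ≤ n) :
    paddedCells μ (n + 1) = insert (0, n - μ.card) (paddedCells μ n) := by
  ext ⟨a, b⟩
  simp only [mem_paddedCells, Finset.mem_insert, Prod.mk.injEq]
  constructor
  · rintro (⟨rfl, hb⟩ | hr)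
    · rcases Nat.lt_or_ge b (n - μ.card) with h' | h'
      · exact Or.inr (Or.inl ⟨rfl, h'⟩)
      · exact Or.inl ⟨rfl, by omega⟩
    · exact Or.inr (Or.inr hr)
  · rintro (⟨rfl, rfl⟩ | ⟨rfl, hb⟩ | hr)
    · exact Or.inl ⟨rfl, by omega⟩
    · exact Or.inl ⟨rfl, by omega⟩
    · exact Or.inr hr

lemma newcell_not_mem {μ : YoungDiagram} {n : ℕ} :
    ((0 : ℕ), n - μ.card) ∉ paddedCells μ n := by
  simp [mem_paddedCells]

lemma col_lt {μ : YoungDiagram} {n : ℕ} {c : ℕ × ℕ} (hc : c ∈ paddedCells μ n)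
    (h1 : 0 < c.1) : c.2 < μ.rowLen 0 := by
  rcases mem_paddedCells.1 hc with ⟨h, _⟩ | ⟨_, hm⟩
  · omega
  · exact lt_of_lt_of_le (YoungDiagram.mem_iff_lt_rowLen.mp hm)
      (μ.rowLen_anti 0 (c.1 - 1) (Nat.zero_le _))

lemma rowLen_pos_of_card_pos {μ : YoungDiagram} (h : 0 < μ.card) : 0 < μ.rowLen 0 := by
  rw [← YoungDiagram.mem_iff_lt_rowLen]
  rw [YoungDiagram.card, Finset.card_pos] at h
  obtain ⟨⟨i, j⟩, hij⟩ := h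
  exact μ.up_left_mem (Nat.zero_le _) (Nat.zero_le _) ((YoungDiagram.mem_cells _).1 hij)

lemma max_at_end {μ : YoungDiagram} {m s : ℕ} {T : ℕ × ℕ → ℕ}
    (hT : IsSYT (paddedCells μ m) T) (hmaj : majN (paddedCells μ m) T ≤ s)
    (hm : 2 * s < m) (hm2 : μ.card + μ.rowLen 0 ≤ m) :
    T (0, m - μ.card - 1) = m := by
  set cells := paddedCells μ m with hcells
  have hcard : cells.card = m := card_paddedCells (by omega)
  have hdle : ∀ i ∈ descents cells T, i ≤ s := fun i hi =>
    le_trans (Finset.single_le_sum (f := fun i => i) (fun _ _ => Nat.zero_le _) hi) hmaj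
  have hsurj : ∀ v, 1 ≤ v → v ≤ m → ∃ c ∈ cells, T c = v := by
    intro v h1 h2
    have hv : v ∈ Set.Icc 1 cells.card := by rw [hcard]; exact ⟨h1, h2⟩
    obtain ⟨c, hc, hTc⟩ := hT.bijOn.surjOn hv
    exact ⟨c, hc, hTc⟩
  have M : ∀ d v, s + 1 ≤ v → v + d ≤ m → ∀ c1 ∈ cells, ∀ c2 ∈ cells,
      T c1 = v → T c2 = v + d → c2.1 ≤ c1.1 := by
    intro d
    induction d with
    | zero =>
      intro v hv hvm c1 h1 c2 h2 e1 e2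
      have : c1 = c2 := hT.bijOn.injOn (Finset.mem_coe.mpr h1) (Finset.mem_coe.mpr h2) (by omega)
      rw [this]
    | succ d ih =>
      intro v hv hvm c1 h1 c2 h2 e1 e2
      obtain ⟨c3, h3, e3⟩ := hsurj (v + d) (by omega) (by omega)
      have step : c2.1 ≤ c3.1 := by
        by_contra hlt
        push_neg at hlt
        have hd : (v + d) ∈ descents cells T := by
          unfold descents
          rw [Finset.mem_filter, Finset.mem_range]
          exact ⟨by omega, c3, h3, c2, h2, e3, by omega, hlt⟩
        have := hdle _ hd
        omega
      exact le_trans step (ih v hv (by omega) c1 h1 c3 h3 e1 e3)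
  obtain ⟨cm, hcm, ecm⟩ := hsurj m (by omega) (le_refl m)
  classical
  set g : ℕ → ℕ × ℕ := fun v => if h : ∃ c ∈ cells, T c = v then h.choose else (0, 0) with hg0
  have hg : ∀ v, 1 ≤ v → v ≤ m → g v ∈ cells ∧ T (g v) = v := by
    intro v h1 h2
    have h := hsurj v h1 h2
    simp only [hg0, dif_pos h]
    exact ⟨h.choose_spec.1, h.choose_spec.2⟩
  have hrow0 : cm.1 = 0 := by
    by_contra h0
    have hpos : 0 < cm.1 := Nat.pos_of_ne_zero h0
    have hrows : ∀ v, s + 1 ≤ v → v ≤ m → 1 ≤ (g v).1 := by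
      intro v hv hvm
      have h1 := (hg v (by omega) hvm).1
      have h2 := (hg v (by omega) hvm).2
      have := M (m - v) v hv (by omega) (g v) h1 cm hcm h2 (by omega)
      omega
    have key : ∀ v w, s + 1 ≤ v → v < w → w ≤ m → (g v).2 = (g w).2 → False := by
      intro v w hv hvw hwm hcoleq
      have hv1 := hg v (by omega) (by omega)
      have hw1 := hg w (by omega) (by omega)
      have hle : (g w).1 ≤ (g v).1 :=
        M (w - v) v hv (by omega) (g v) hv1.1 (g w) hw1.1 hv1.2 (by omega)
      rcases Nat.lt_or_ge (g w).1 (g v).1 with hlt | hge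
      · have := hT.col_strict (g w) hw1.1 (g v) hv1.1 hcoleq.symm hlt
        omega
      · have heq : g v = g w := Prod.ext (by omega) hcoleq
        rw [heq] at hv1
        omega
    have hinj1 : (Finset.Icc (s + 1) m).card ≤ (Finset.range (μ.rowLen 0)).card := by
      apply Finset.card_le_card_of_injOn (fun v => (g v).2)
      · intro v hv
        rw [Finset.mem_coe, Finset.mem_Icc] at hv
        rw [Finset.mem_coe, Finset.mem_range]
        exact col_lt (hg v (by omega) hv.2).1 (hrows v hv.1 hv.2)
      · intro v hv w hw hvw
        rw [Finset.mem_coe, Finset.mem_Icc] at hv hw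
        by_contra hne
        rcases Nat.lt_or_ge v w with h | h
        · exact key v w hv.1 h hw.2 hvw
        · exact key w v hw.1 (by omega) hv.2 hvw.symm
    have hinj2 : (Finset.Icc (s + 1) m).card ≤ μ.cells.card := by
      apply Finset.card_le_card_of_injOn (fun v => ((g v).1 - 1, (g v).2))
      · intro v hv
        rw [Finset.mem_coe, Finset.mem_Icc] at hv
        have h1 := (hg v (by omega) hv.2).1
        have hr := hrows v hv.1 hv.2
        rcases mem_paddedCells.1 h1 with ⟨h, _⟩ | ⟨_, hmem⟩
        · omega
        · exact (YoungDiagram.mem_cells _).2 hmem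
      · intro v hv w hw hvw
        rw [Finset.mem_coe, Finset.mem_Icc] at hv hw
        simp only [Prod.mk.injEq] at hvw
        have hrv := hrows v hv.1 hv.2
        have hrw := hrows w hw.1 hw.2
        have heq : g v = g w := Prod.ext (by omega) hvw.2
        have h1 := (hg v (by omega) hv.2).2
        have h2 := (hg w (by omega) hw.2).2
        rw [heq] at h1
        omega
    rw [Nat.card_Icc, Finset.card_range] at hinj1
    rw [Nat.card_Icc] at hinj2
    have : μ.cells.card = μ.card := rfl
    omega
  have hne1 : 1 ≤ m - μ.card := by
    rcases Nat.eq_zero_or_pos μ.card with h | h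
    · omega
    · have := rowLen_pos_of_card_pos h
      omega
  have hcol : cm.2 = m - μ.card - 1 := by
    have hlt : cm.2 < m - μ.card := by
      rcases mem_paddedCells.1 hcm with ⟨_, h⟩ | ⟨h, _⟩
      · exact h
      · omega
    by_contra hne
    have hmem : ((0 : ℕ), m - μ.card - 1) ∈ cells :=
      mem_paddedCells.2 (Or.inl ⟨rfl, by omega⟩)
    have h1 := hT.row_strict cm hcm (0, m - μ.card - 1) hmem (by rw [hrow0]) (by simp; omega)
    have h2 := (hT.bijOn.mapsTo (Finset.mem_coe.mpr hmem)).2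
    rw [hcard] at h2
    omega
  have : ((0 : ℕ), m - μ.card - 1) = cm := Prod.ext hrow0.symm hcol.symm
  rw [this]
  exact ecm


lemma isSYT_insert {μ : YoungDiagram} {n : ℕ} {T : ℕ × ℕ → ℕ}
    (hn : μ.card + μ.rowLen 0 ≤ n) (hT : IsSYT (paddedCells μ n) T) :
    IsSYT (paddedCells μ (n + 1)) (fun c => if c = ((0 : ℕ), n - μ.card) then n + 1 else T c) := by
  set w : ℕ × ℕ := ((0 : ℕ), n - μ.card) with hwdef
  have hw : w ∉ paddedCells μ n := newcell_not_mem
  have hins : paddedCells μ (n + 1) = insert w (paddedCells μ n) := paddedCells_succ (by omega)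
  have hcard : (paddedCells μ n).card = n := card_paddedCells (by omega)
  have hcard' : (paddedCells μ (n + 1)).card = n + 1 := card_paddedCells (by omega)
  have hval : ∀ c ∈ paddedCells μ n, 1 ≤ T c ∧ T c ≤ n := by
    intro c hc
    have h := hT.bijOn.mapsTo (Finset.mem_coe.mpr hc)
    rw [hcard] at h
    exact h
  constructor
  · rw [hcard']
    refine ⟨?_, ?_, ?_⟩
    · intro c hc
      rw [Finset.mem_coe, hins, Finset.mem_insert] at hc
      by_cases h : c = w
      · simp only [if_pos h]
        exact ⟨by omega, le_refl _⟩
      · simp only [if_neg h]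
        have hc' : c ∈ paddedCells μ n := by tauto
        have := hval c hc'
        exact ⟨this.1, by omega⟩
    · intro c1 h1 c2 h2 heq
      rw [Finset.mem_coe, hins, Finset.mem_insert] at h1 h2
      simp only [] at heq
      by_cases e1 : c1 = w <;> by_cases e2 : c2 = w
      · rw [e1, e2]
      · rw [if_pos e1, if_neg e2] at heq
        have hc2 : c2 ∈ paddedCells μ n := by tauto
        have := hval c2 hc2
        omega
      · rw [if_neg e1, if_pos e2] at heq
        have hc1 : c1 ∈ paddedCells μ n := by tauto
        have := hval c1 hc1
        omega
      · rw [if_neg e1, if_neg e2] at heq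
        have hc1 : c1 ∈ paddedCells μ n := by tauto
        have hc2 : c2 ∈ paddedCells μ n := by tauto
        exact hT.bijOn.injOn (Finset.mem_coe.mpr hc1) (Finset.mem_coe.mpr hc2) heq
    · intro v hv
      have hv1 : 1 ≤ v := hv.1
      have hv2 : v ≤ n + 1 := hv.2
      rcases Nat.lt_or_ge v (n + 1) with h | h
      · obtain ⟨c, hc, hTc⟩ := hT.bijOn.surjOn (show v ∈ Set.Icc 1 (paddedCells μ n).card by
          rw [hcard]; exact ⟨hv1, by omega⟩)
        rw [Finset.mem_coe] at hc
        have hne : c ≠ w := fun h' => hw (h' ▸ hc)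
        refine ⟨c, ?_, ?_⟩
        · rw [Finset.mem_coe, hins, Finset.mem_insert]
          exact Or.inr hc
        · simp only [if_neg hne]
          exact hTc
      · have hv3 : v = n + 1 := by omega
        refine ⟨w, ?_, ?_⟩
        · rw [Finset.mem_coe, hins, Finset.mem_insert]
          exact Or.inl rfl
        · show (if w = w then n + 1 else T w) = v
          rw [if_pos rfl]
          omega
  · intro c1 h1 c2 h2 hr hc
    rw [hins, Finset.mem_insert] at h1 h2
    by_cases e1 : c1 = w
    · exfalso
      have hc2 : c2 ∈ paddedCells μ n := by
        rcases h2 with h2 | h2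
        · exfalso
          rw [e1, h2] at hc
          exact lt_irrefl _ hc
        · exact h2
      rcases mem_paddedCells.1 hc2 with ⟨hz, hb⟩ | ⟨hp, _⟩
      · rw [e1] at hc
        simp only [hwdef] at hc
        omega
      · rw [e1] at hr
        simp only [hwdef] at hr
        omega
    · have hc1 : c1 ∈ paddedCells μ n := by tauto
      by_cases e2 : c2 = w
      · simp only [if_neg e1, if_pos e2]
        have := hval c1 hc1
        omega
      · have hc2 : c2 ∈ paddedCells μ n := by tauto
        simp only [if_neg e1, if_neg e2]
        exact hT.row_strict c1 hc1 c2 hc2 hr hc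
  · intro c1 h1 c2 h2 hcc hr
    rw [hins, Finset.mem_insert] at h1 h2
    by_cases e2 : c2 = w
    · exfalso
      rw [e2] at hr
      simp only [hwdef] at hr
      omega
    · have hc2 : c2 ∈ paddedCells μ n := by tauto
      by_cases e1 : c1 = w
      · exfalso
        have hp2 : 0 < c2.1 := by
          rw [e1] at hr
          simp only [hwdef] at hr
          omega
        have h3 := col_lt hc2 hp2
        have h4 : c2.2 = n - μ.card := by
          rw [e1] at hcc
          simp only [hwdef] at hcc
          omega
        omega
      · have hc1 : c1 ∈ paddedCells μ n := by tauto
        simp only [if_neg e1, if_neg e2]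
        exact hT.col_strict c1 hc1 c2 hc2 hcc hr
  · intro c hc
    rw [hins, Finset.mem_insert] at hc
    push_neg at hc
    simp only [if_neg hc.1]
    exact hT.zeros c hc.2

lemma descents_insert {μ : YoungDiagram} {n : ℕ} {T : ℕ × ℕ → ℕ}
    (hn : μ.card + μ.rowLen 0 ≤ n) (hT : IsSYT (paddedCells μ n) T) :
    descents (paddedCells μ (n + 1)) (fun c => if c = ((0 : ℕ), n - μ.card) then n + 1 else T c)
      = descents (paddedCells μ n) T := by
  set w : ℕ × ℕ := ((0 : ℕ), n - μ.card) with hwdef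
  have hw : w ∉ paddedCells μ n := newcell_not_mem
  have hins : paddedCells μ (n + 1) = insert w (paddedCells μ n) := paddedCells_succ (by omega)
  have hcard : (paddedCells μ n).card = n := card_paddedCells (by omega)
  have hcard' : (paddedCells μ (n + 1)).card = n + 1 := card_paddedCells (by omega)
  have hval : ∀ c ∈ paddedCells μ n, 1 ≤ T c ∧ T c ≤ n := by
    intro c hc
    have h := hT.bijOn.mapsTo (Finset.mem_coe.mpr hc)
    rw [hcard] at h
    exact h
  ext i
  unfold descents
  rw [Finset.mem_filter, Finset.mem_filter, Finset.mem_range, Finset.mem_range, hcard, hcard']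
  constructor
  · rintro ⟨hi, c1, h1, c2, h2, e1, e2, hlt⟩
    rw [hins, Finset.mem_insert] at h1 h2
    simp only [] at e1 e2
    have hc2 : c2 ≠ w := by
      intro h
      rw [h] at hlt
      simp only [hwdef] at hlt
      omega
    have hc2' : c2 ∈ paddedCells μ n := by tauto
    rw [if_neg hc2] at e2
    have hb2 := hval c2 hc2'
    by_cases hc1 : c1 = w
    · exfalso
      rw [if_pos hc1] at e1
      omega
    · have hc1' : c1 ∈ paddedCells μ n := by tauto
      rw [if_neg hc1] at e1
      exact ⟨by omega, c1, hc1', c2, hc2', e1, e2, hlt⟩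
  · rintro ⟨hi, c1, h1, c2, h2, e1, e2, hlt⟩
    have hc1 : c1 ≠ w := fun h => hw (h ▸ h1)
    have hc2 : c2 ≠ w := fun h => hw (h ▸ h2)
    refine ⟨by omega, c1, ?_, c2, ?_, ?_, ?_, hlt⟩
    · rw [hins, Finset.mem_insert]; exact Or.inr h1
    · rw [hins, Finset.mem_insert]; exact Or.inr h2
    · simp only [if_neg hc1]; exact e1
    · simp only [if_neg hc2]; exact e2

lemma isSYT_restrict {μ : YoungDiagram} {n : ℕ} {T' : ℕ × ℕ → ℕ}
    (hn : μ.card + μ.rowLen 0 ≤ n) (hT' : IsSYT (paddedCells μ (n + 1)) T')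
    (hwv : T' ((0 : ℕ), n - μ.card) = n + 1) :
    IsSYT (paddedCells μ n) (fun c => if c = ((0 : ℕ), n - μ.card) then 0 else T' c) := by
  set w : ℕ × ℕ := ((0 : ℕ), n - μ.card) with hwdef
  have hw : w ∉ paddedCells μ n := newcell_not_mem
  have hins : paddedCells μ (n + 1) = insert w (paddedCells μ n) := paddedCells_succ (by omega)
  have hcard : (paddedCells μ n).card = n := card_paddedCells (by omega)
  have hcard' : (paddedCells μ (n + 1)).card = n + 1 := card_paddedCells (by omega)
  have hsub : ∀ c ∈ paddedCells μ n, c ∈ paddedCells μ (n + 1) := by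
    intro c hc
    rw [hins, Finset.mem_insert]
    exact Or.inr hc
  have hwmem : w ∈ paddedCells μ (n + 1) := by
    rw [hins]; exact Finset.mem_insert_self _ _
  have hval : ∀ c ∈ paddedCells μ n, 1 ≤ T' c ∧ T' c ≤ n := by
    intro c hc
    have h1 := hT'.bijOn.mapsTo (Finset.mem_coe.mpr (hsub c hc))
    rw [hcard'] at h1
    have hne : c ≠ w := fun h => hw (h ▸ hc)
    have h2 : T' c ≠ n + 1 := by
      intro h
      apply hne
      exact hT'.bijOn.injOn (Finset.mem_coe.mpr (hsub c hc)) (Finset.mem_coe.mpr hwmem)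
        (by rw [h, hwv])
    have h3 := h1.1
    have h4 := h1.2
    exact ⟨h3, by omega⟩
  constructor
  · rw [hcard]
    refine ⟨?_, ?_, ?_⟩
    · intro c hc
      rw [Finset.mem_coe] at hc
      have hne : c ≠ w := fun h => hw (h ▸ hc)
      simp only [if_neg hne]
      exact hval c hc
    · intro c1 h1 c2 h2 heq
      rw [Finset.mem_coe] at h1 h2
      have hne1 : c1 ≠ w := fun h => hw (h ▸ h1)
      have hne2 : c2 ≠ w := fun h => hw (h ▸ h2)
      simp only [if_neg hne1, if_neg hne2] at heq
      exact hT'.bijOn.injOn (Finset.mem_coe.mpr (hsub c1 h1)) (Finset.mem_coe.mpr (hsub c2 h2)) heq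
    · intro v hv
      have hv1 : 1 ≤ v := hv.1
      have hv2 : v ≤ n := hv.2
      obtain ⟨c, hc, hTc⟩ := hT'.bijOn.surjOn (show v ∈ Set.Icc 1 (paddedCells μ (n + 1)).card by
        rw [hcard']; exact ⟨hv1, by omega⟩)
      rw [Finset.mem_coe, hins, Finset.mem_insert] at hc
      have hcne : c ≠ w := by
        intro h
        rw [h, hwv] at hTc
        omega
      have hc' : c ∈ paddedCells μ n := by tauto
      refine ⟨c, Finset.mem_coe.mpr hc', ?_⟩
      simp only [if_neg hcne]
      exact hTc
  · intro c1 h1 c2 h2 hr hc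
    have hne1 : c1 ≠ w := fun h => hw (h ▸ h1)
    have hne2 : c2 ≠ w := fun h => hw (h ▸ h2)
    simp only [if_neg hne1, if_neg hne2]
    exact hT'.row_strict c1 (hsub c1 h1) c2 (hsub c2 h2) hr hc
  · intro c1 h1 c2 h2 hcc hr
    have hne1 : c1 ≠ w := fun h => hw (h ▸ h1)
    have hne2 : c2 ≠ w := fun h => hw (h ▸ h2)
    simp only [if_neg hne1, if_neg hne2]
    exact hT'.col_strict c1 (hsub c1 h1) c2 (hsub c2 h2) hcc hr
  · intro c hc
    by_cases h : c = w
    · simp only [if_pos h]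
    · simp only [if_neg h]
      apply hT'.zeros
      rw [hins, Finset.mem_insert]
      push_neg
      exact ⟨h, hc⟩

end Aux

/-- The set `A(n)` of pairs `(T, ν)` where `T` is a standard Young tableau of
shape `μ[n]` with `des T ≤ k - 1`, and `ν` is a partition (encoded as an antitone
function `ℕ → ℕ` listing its parts) with at most `k - des T - 1` parts, each part
at most `n - k`, such that `maj T + |ν| = s`. -/
def setA (μ : YoungDiagram) (k s n : ℕ) : Set ((ℕ × ℕ → ℕ) × (ℕ → ℕ)) :=
  { Tν | IsSYT (paddedCells μ n) Tν.1 ∧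
      desN (paddedCells μ n) Tν.1 ≤ k - 1 ∧
      Antitone Tν.2 ∧
      (∀ i, k - desN (paddedCells μ n) Tν.1 - 1 ≤ i → Tν.2 i = 0) ∧
      (∀ i, Tν.2 i ≤ n - k) ∧
      majN (paddedCells μ n) Tν.1 + ∑ i ∈ Finset.range k, Tν.2 i = s }

/-- for fixed `k ≥ 1`, `s ≥ 0` and a partition `μ`,
`|A(n)| = |A(n+1)|` for every `n > max (2s) (s+k)` with `n ≥ |μ| + μ₁`. -/
theorem stmt0 (k s : ℕ) (hk : 1 ≤ k) (μ : YoungDiagram) (n : ℕ)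
    (hn1 : max (2 * s) (s + k) < n) (hn2 : μ.card + μ.rowLen 0 ≤ n) :
    (setA μ k s n).ncard = (setA μ k s (n + 1)).ncard := by
  classical
  rw [max_lt_iff] at hn1
  obtain ⟨hs2, hsk⟩ := hn1
  set w : ℕ × ℕ := ((0 : ℕ), n - μ.card) with hwdef
  set Φ : ((ℕ × ℕ → ℕ) × (ℕ → ℕ)) → ((ℕ × ℕ → ℕ) × (ℕ → ℕ)) :=
    fun p => (fun c => if c = w then n + 1 else p.1 c, p.2) with hΦdef
  have himg : Φ '' setA μ k s n = setA μ k s (n + 1) := by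
    apply Set.Subset.antisymm
    · rintro x ⟨⟨T, ν⟩, hmem, rfl⟩
      obtain ⟨h1, h2, h3, h4, h5, h6⟩ := hmem
      have hdes : descents (paddedCells μ (n + 1)) (fun c => if c = w then n + 1 else T c)
          = descents (paddedCells μ n) T := Aux.descents_insert hn2 h1
      refine ⟨Aux.isSYT_insert hn2 h1, ?_, h3, ?_, ?_, ?_⟩
      · show desN _ _ ≤ k - 1
        unfold desN
        rw [hdes]
        exact h2
      · intro i hi
        apply h4
        unfold desN at hi ⊢
        rwa [hdes] at hi
      · intro i
        exact le_trans (h5 i) (by omega)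
      · show majN _ _ + _ = s
        unfold majN
        rw [hdes]
        exact h6
    · rintro ⟨T', ν⟩ hmem
      simp only [setA, Set.mem_setOf_eq] at hmem
      obtain ⟨h1, h2, h3, h4, h5, h6⟩ := hmem
      have hmaj : majN (paddedCells μ (n + 1)) T' ≤ s := by omega
      have hend := Aux.max_at_end h1 hmaj (by omega) (by omega)
      have hw' : T' w = n + 1 := by
        have he : (n + 1) - μ.card - 1 = n - μ.card := by omega
        rw [he] at hend
        exact hend
      set T : ℕ × ℕ → ℕ := fun c => if c = w then 0 else T' c with hTdef
      have hT : IsSYT (paddedCells μ n) T := Aux.isSYT_restrict hn2 h1 hw'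
      have hTT' : (fun c => if c = w then n + 1 else T c) = T' := by
        funext c
        by_cases hc : c = w
        · rw [if_pos hc, hc, hw']
        · rw [if_neg hc, hTdef]
          simp only [if_neg hc]
      have hdes : descents (paddedCells μ (n + 1)) T' = descents (paddedCells μ n) T := by
        rw [← hTT']
        exact Aux.descents_insert hn2 hT
      have hdesN : desN (paddedCells μ (n + 1)) T' = desN (paddedCells μ n) T := by
        unfold desN
        rw [hdes]
      have hmajN : majN (paddedCells μ (n + 1)) T' = majN (paddedCells μ n) T := by
        unfold majN
        rw [hdes]
      refine ⟨(T, ν), ⟨hT, ?_, h3, ?_, ?_, ?_⟩, ?_⟩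
      · rw [← hdesN]
        exact h2
      · intro i hi
        apply h4
        rwa [hdesN]
      · intro i
        show ν i ≤ n - k
        by_cases hik : i < k
        · have hb : ν i ≤ ∑ j ∈ Finset.range k, ν j :=
            Finset.single_le_sum (fun _ _ => Nat.zero_le _) (Finset.mem_range.2 hik)
          omega
        · have := h4 i (by omega)
          omega
      · rw [← hmajN]
        exact h6
      · simp only [hΦdef, Prod.mk.injEq]
        exact ⟨hTT', trivial⟩
  have hinj : Set.InjOn Φ (setA μ k s n) := by
    rintro ⟨T1, ν1⟩ h1 ⟨T2, ν2⟩ h2 heq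
    simp only [hΦdef, Prod.mk.injEq] at heq
    obtain ⟨hTf, hν⟩ := heq
    have hz1 : T1 w = 0 := h1.1.zeros w Aux.newcell_not_mem
    have hz2 : T2 w = 0 := h2.1.zeros w Aux.newcell_not_mem
    have hT12 : T1 = T2 := by
      funext c
      by_cases hc : c = w
      · rw [hc, hz1, hz2]
      · have := congrFun hTf c
        simpa [if_neg hc] using this
    rw [Prod.mk.injEq]
    exact ⟨hT12, hν⟩
  rw [← himg, Set.ncard_image_of_injOn hinj]
end

section
/- Fix integers m ≥ 0 and s ≥ 0 and a partition μ. For an integer n ≥ |μ| + μ_1, let B(n) be the set of pairs (T, ν) where T is a standard Young tableau of shape μ[n] with des(T) ≤ n − m − 1, ν is a partition with at most n − m − des(T) − 1 parts, each part of size at most m, and maj(T) + |ν| = s. Then |B(n)| = |B(n+1)| for every integer n > max(2s + m + 1, |μ| + μ_1). (This is the combinatorial core of Theorem 1.5(2): for fixed m and homological degree d = 2s, the multiplicity of the irreducible S_n-module indexed by μ[n] in H_d(X_{n,n−m}) equals |B(n)|, so these multiplicities stabilize.) -/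
/-- The set `B(n)` of pairs `(T, ν)` where `T` is a standard Young tableau of
shape `μ[n]` with `des T ≤ n - m - 1`, and `ν` is a partition (encoded as an
antitone function `ℕ → ℕ` listing its parts) with at most `n - m - des T - 1`
parts, each part at most `m`, such that `maj T + |ν| = s`. -/
def setB (μ : YoungDiagram) (m s n : ℕ) : Set ((ℕ × ℕ → ℕ) × (ℕ → ℕ)) :=
  { Tν | IsSYT (paddedCells μ n) Tν.1 ∧
      desN (paddedCells μ n) Tν.1 ≤ n - m - 1 ∧
      Antitone Tν.2 ∧
      (∀ i, n - m - desN (paddedCells μ n) Tν.1 - 1 ≤ i → Tν.2 i = 0) ∧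
      (∀ i, Tν.2 i ≤ m) ∧
      majN (paddedCells μ n) Tν.1 + ∑ i ∈ Finset.range (n - m), Tν.2 i = s }

lemma mem_paddedCells {μ : YoungDiagram} {n : ℕ} {c : ℕ × ℕ} :
    c ∈ paddedCells μ n ↔ (c.1 = 0 ∧ c.2 < n - μ.card) ∨ (1 ≤ c.1 ∧ (c.1 - 1, c.2) ∈ μ) := by
  simp only [paddedCells, Finset.mem_union, Finset.mem_image, Finset.mem_range]
  constructor
  · rintro (⟨j, hj, rfl⟩ | ⟨⟨a, b⟩, hab, rfl⟩)
    · exact Or.inl ⟨rfl, hj⟩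
    · exact Or.inr ⟨Nat.succ_le_succ (Nat.zero_le _), by simpa using hab⟩
  · rintro (⟨h0, hj⟩ | ⟨h1, hm⟩)
    · exact Or.inl ⟨c.2, hj, by rw [← h0]⟩
    · refine Or.inr ⟨(c.1 - 1, c.2), hm, ?_⟩
      simp [Nat.sub_add_cancel h1]

lemma card_paddedCells {μ : YoungDiagram} {n : ℕ} (h : μ.card ≤ n) :
    (paddedCells μ n).card = n := by
  rw [paddedCells, Finset.card_union_of_disjoint, Finset.card_image_of_injective,
    Finset.card_image_of_injective, Finset.card_range]
  · have : μ.cells.card = μ.card := rfl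
    omega
  · intro a b hab; simpa [Prod.ext_iff] using hab
  · intro a b hab; simpa [Prod.ext_iff] using hab
  · simp only [Finset.disjoint_left, Finset.mem_image, Finset.mem_range]
    rintro ⟨x, y⟩ ⟨j, hj, he⟩ ⟨d, hd, he2⟩
    simp [Prod.ext_iff] at he he2
    omega

section
variable {cells : Finset (ℕ × ℕ)} {T : ℕ × ℕ → ℕ}

noncomputable def cellOf (cells : Finset (ℕ × ℕ)) (T : ℕ × ℕ → ℕ) (i : ℕ) : ℕ × ℕ :=
  if h : ∃ c ∈ cells, T c = i then h.choose else (0, 0)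

lemma cellOf_spec (hT : IsSYT cells T) {i : ℕ} (h1 : 1 ≤ i) (h2 : i ≤ cells.card) :
    cellOf cells T i ∈ cells ∧ T (cellOf cells T i) = i := by
  obtain ⟨c, hc, hTc⟩ := hT.bijOn.surjOn (Set.mem_Icc.mpr ⟨h1, h2⟩)
  have h : ∃ c ∈ cells, T c = i := ⟨c, hc, hTc⟩
  rw [cellOf, dif_pos h]
  exact ⟨h.choose_spec.1, h.choose_spec.2⟩

lemma cellOf_eq (hT : IsSYT cells T) {i : ℕ} {c : ℕ × ℕ} (hc : c ∈ cells) (hTc : T c = i) :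
    cellOf cells T i = c := by
  have h1 : 1 ≤ i := by
    have := hT.bijOn.mapsTo hc; rw [hTc] at this; exact (Set.mem_Icc.mp this).1
  have h2 : i ≤ cells.card := by
    have := hT.bijOn.mapsTo hc; rw [hTc] at this; exact (Set.mem_Icc.mp this).2
  obtain ⟨hmem, hval⟩ := cellOf_spec hT h1 h2
  exact hT.bijOn.injOn hmem hc (by rw [hval, hTc])

lemma mem_descents_iff (hT : IsSYT cells T) {i : ℕ} (h1 : 1 ≤ i) (h2 : i + 1 ≤ cells.card) :
    i ∈ descents cells T ↔ (cellOf cells T i).1 < (cellOf cells T (i + 1)).1 := by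
  classical
  obtain ⟨hc1, hv1⟩ := cellOf_spec hT h1 (le_trans (Nat.le_succ i) h2)
  obtain ⟨hc2, hv2⟩ := cellOf_spec hT (le_trans h1 (Nat.le_succ i)) h2
  rw [descents, Finset.mem_filter]
  constructor
  · rintro ⟨-, c1, hm1, c2, hm2, he1, he2, hlt⟩
    rwa [cellOf_eq hT hm1 he1, cellOf_eq hT hm2 he2]
  · intro h
    exact ⟨Finset.mem_range.mpr (by omega), _, hc1, _, hc2, hv1, hv2, h⟩

lemma descents_subset (hT : IsSYT cells T) {i : ℕ} (h : i ∈ descents cells T) :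
    1 ≤ i ∧ i + 1 ≤ cells.card := by
  obtain ⟨-, c1, hm1, c2, hm2, he1, he2, -⟩ := Finset.mem_filter.mp h
  have h1 := hT.bijOn.mapsTo hm1
  have h2 := hT.bijOn.mapsTo hm2
  rw [he1] at h1; rw [he2] at h2
  exact ⟨h1.1, h2.2⟩

lemma row_le_of_no_descent (hT : IsSYT cells T) {i j : ℕ} (h1 : 1 ≤ i) (hij : i ≤ j)
    (hj : j ≤ cells.card) (h : ∀ k, i ≤ k → k < j → k ∉ descents cells T) :
    (cellOf cells T j).1 ≤ (cellOf cells T i).1 := by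
  induction j with
  | zero => omega
  | succ j ih =>
    rcases Nat.eq_or_lt_of_le hij with rfl | hlt
    · exact le_refl _
    · have hij' : i ≤ j := by omega
      have h' : (cellOf cells T (j+1)).1 ≤ (cellOf cells T j).1 := by
        by_contra hcon
        push_neg at hcon
        exact h j hij' (by omega) ((mem_descents_iff hT (by omega) hj).mpr hcon)
      exact le_trans h' (ih hij' (by omega) (fun k hk hk' => h k hk (by omega)))

end

section
variable {μ : YoungDiagram} {N : ℕ} {T : ℕ × ℕ → ℕ}

lemma above_mem (hN : μ.card + μ.rowLen 0 ≤ N) {c : ℕ × ℕ}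
    (hc : c ∈ paddedCells μ N) (h1 : 1 ≤ c.1) : (c.1 - 1, c.2) ∈ paddedCells μ N := by
  rcases mem_paddedCells.mp hc with ⟨h0, -⟩ | ⟨-, hm⟩
  · omega
  rcases Nat.eq_or_lt_of_le h1 with h | h
  · refine mem_paddedCells.mpr (Or.inl ⟨by omega, ?_⟩)
    have : c.2 < μ.rowLen 0 := by
      rw [← YoungDiagram.mem_iff_lt_rowLen]
      have : c.1 - 1 = 0 := by omega
      rwa [this] at hm
    omega
  · refine mem_paddedCells.mpr (Or.inr ⟨by omega, ?_⟩)
    have : (c.1 - 1 - 1, c.2) ∈ μ := μ.up_left_mem (by omega) (le_refl _) hm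
    exact this

lemma row_cellOf_one (hT : IsSYT (paddedCells μ N) T) (hN : μ.card + μ.rowLen 0 ≤ N)
    (h1 : 1 ≤ (paddedCells μ N).card) : (cellOf (paddedCells μ N) T 1).1 = 0 := by
  obtain ⟨hmem, hval⟩ := cellOf_spec hT le_rfl h1
  by_contra h
  have h1c : 1 ≤ (cellOf (paddedCells μ N) T 1).1 := by omega
  have habove := above_mem hN hmem h1c
  have hlt := hT.col_strict _ habove _ hmem rfl (by omega)
  have h2 := Set.mem_Icc.mp (hT.bijOn.mapsTo habove)
  omega

lemma exists_descent_lt (hT : IsSYT (paddedCells μ N) T) (hN : μ.card + μ.rowLen 0 ≤ N)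
    {c : ℕ × ℕ} (hc : c ∈ paddedCells μ N) (h1 : 1 ≤ c.1) :
    ∃ d ∈ descents (paddedCells μ N) T, d < T c := by
  by_contra h
  push_neg at h
  have hk := hT.bijOn.mapsTo hc
  have hk1 : 1 ≤ T c := hk.1
  have hk2 : T c ≤ (paddedCells μ N).card := hk.2
  have := row_le_of_no_descent hT le_rfl hk1 hk2
    (fun k _ hk' hd => absurd (h k hd) (by omega))
  rw [cellOf_eq hT hc rfl, row_cellOf_one hT hN (by omega)] at this
  omega
end

section
variable {μ : YoungDiagram} {N : ℕ} {T : ℕ × ℕ → ℕ}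

open Classical in
noncomputable def dsc (cells : Finset (ℕ × ℕ)) (T : ℕ × ℕ → ℕ) (c : ℕ × ℕ) : ℕ :=
  if h : ((descents cells T).filter (· < T c)).Nonempty
  then ((descents cells T).filter (· < T c)).max' h else 0

lemma card_le_majN (hT : IsSYT (paddedCells μ N) T) (hN : μ.card + μ.rowLen 0 ≤ N) :
    μ.card ≤ majN (paddedCells μ N) T := by
  classical
  set P := paddedCells μ N with hP
  set D := descents P T with hDdef
  set S : Finset (ℕ × ℕ) := P.filter (fun c => 1 ≤ c.1) with hS
  have hScard : S.card = μ.card := by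
    have hinj : Function.Injective (fun c : ℕ × ℕ => (c.1 + 1, c.2)) := by
      intro a b hab; simpa [Prod.ext_iff] using hab
    have hSeq : S = μ.cells.image (fun c => (c.1 + 1, c.2)) := by
      ext c
      constructor
      · intro hcS
        obtain ⟨hm, h1⟩ := Finset.mem_filter.mp hcS
        rcases mem_paddedCells.mp hm with ⟨h0, -⟩ | ⟨-, hmem⟩
        · omega
        · refine Finset.mem_image.mpr ⟨(c.1 - 1, c.2), hmem, ?_⟩
          have h2 : c.1 - 1 + 1 = c.1 := by omega
          calc ((c.1 - 1, c.2).1 + 1, (c.1 - 1, c.2).2) = (c.1 - 1 + 1, c.2) := rfl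
            _ = (c.1, c.2) := by rw [h2]
            _ = c := Prod.mk.eta
      · intro hcI
        obtain ⟨x, hx, he⟩ := Finset.mem_image.mp hcI
        have he' : x.1 + 1 = c.1 ∧ x.2 = c.2 := by
          simpa [Prod.ext_iff] using he
        refine Finset.mem_filter.mpr ⟨mem_paddedCells.mpr (Or.inr ⟨by omega, ?_⟩), by omega⟩
        have h1 : c.1 - 1 = x.1 := by omega
        have h2 : c.2 = x.2 := he'.2.symm
        have : (c.1 - 1, c.2) = x := by rw [h1, h2]
        rwa [this]
    rw [hSeq, Finset.card_image_of_injective _ hinj]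
  -- key facts about dsc on S
  have hdsc : ∀ c ∈ S, dsc P T c ∈ D ∧ dsc P T c < T c ∧
      ∀ e ∈ D, e < T c → e ≤ dsc P T c := by
    intro c hc
    obtain ⟨hcP, hc1⟩ := Finset.mem_filter.mp hc
    obtain ⟨d, hd, hdlt⟩ := exists_descent_lt hT hN hcP hc1
    have hne : (D.filter (· < T c)).Nonempty := ⟨d, Finset.mem_filter.mpr ⟨hd, hdlt⟩⟩
    rw [dsc, dif_pos hne]
    have hmax := Finset.max'_mem _ hne
    rw [Finset.mem_filter] at hmax
    refine ⟨hmax.1, hmax.2, fun e he helt => Finset.le_max' _ e ?_⟩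
    simp only [Finset.mem_filter]
    exact ⟨he, helt⟩
  have hfib : S.card = ∑ d ∈ D, (S.filter (fun c => dsc P T c = d)).card :=
    Finset.card_eq_sum_card_fiberwise (fun c hc => (hdsc c hc).1)
  have hfibcard : ∀ d ∈ D, (S.filter (fun c => dsc P T c = d)).card ≤ d := by
    intro d hd
    have : (S.filter (fun c => dsc P T c = d)).card ≤ (Finset.Icc 1 d).card := by
      apply Finset.card_le_card_of_injOn (fun c => T (c.1 - 1, c.2))
      · intro c hc
        obtain ⟨hcS, hcd⟩ := Finset.mem_filter.mp hc
        obtain ⟨hcP, hc1⟩ := Finset.mem_filter.mp hcS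
        have habove := above_mem hN hcP hc1
        have hk' := Set.mem_Icc.mp (hT.bijOn.mapsTo habove)
        have hklt : T (c.1 - 1, c.2) < T c := hT.col_strict _ habove _ hcP rfl (by omega)
        obtain ⟨hdD, hdlt, hdmax⟩ := hdsc c hcS
        rw [Finset.mem_coe, Finset.mem_Icc]
        refine ⟨hk'.1, ?_⟩
        by_contra hcon
        push_neg at hcon
        have hkT := Set.mem_Icc.mp (hT.bijOn.mapsTo hcP)
        have hrow := row_le_of_no_descent hT hk'.1 (le_of_lt hklt) hkT.2 ?_
        · rw [cellOf_eq hT hcP rfl, cellOf_eq hT habove rfl] at hrow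
          simp at hrow
          omega
        · intro k hk1 hk2 hkD
          have := hdmax k hkD (by omega)
          omega
      · intro c1 hc1 c2 hc2 he
        obtain ⟨hc1P, h11⟩ := Finset.mem_filter.mp (Finset.mem_filter.mp hc1).1
        obtain ⟨hc2P, h21⟩ := Finset.mem_filter.mp (Finset.mem_filter.mp hc2).1
        have ha1 := above_mem hN hc1P h11
        have ha2 := above_mem hN hc2P h21
        have := hT.bijOn.injOn ha1 ha2 he
        simp only [Prod.ext_iff] at this
        exact Prod.ext (by omega) this.2
    simpa using this
  calc μ.card = S.card := hScard.symm
    _ = ∑ d ∈ D, (S.filter (fun c => dsc P T c = d)).card := hfib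
    _ ≤ ∑ d ∈ D, d := Finset.sum_le_sum hfibcard
    _ = majN P T := rfl
end

section
variable {μ : YoungDiagram} {N n : ℕ} {T : ℕ × ℕ → ℕ}

lemma desN_le_majN (hT : IsSYT (paddedCells μ N) T) :
    desN (paddedCells μ N) T ≤ majN (paddedCells μ N) T := by
  rw [desN, majN, Finset.card_eq_sum_ones]
  exact Finset.sum_le_sum fun i hi => (descents_subset hT hi).1

lemma descent_le_majN (hT : IsSYT (paddedCells μ N) T) {d : ℕ}
    (hd : d ∈ descents (paddedCells μ N) T) : d ≤ majN (paddedCells μ N) T :=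
  Finset.single_le_sum (fun i _ => Nat.zero_le i) hd

lemma cellOf_max_eq (hT : IsSYT (paddedCells μ N) T) (hN : μ.card + μ.rowLen 0 ≤ N)
    {s : ℕ} (hmaj : majN (paddedCells μ N) T ≤ s) (hbig : 2 * s + 1 ≤ N) :
    cellOf (paddedCells μ N) T N = (0, N - μ.card - 1) := by
  have hμs : μ.card ≤ s := le_trans (card_le_majN hT hN) hmaj
  have hcard : (paddedCells μ N).card = N := card_paddedCells (by omega)
  obtain ⟨hmem, hval⟩ := cellOf_spec hT (by omega : 1 ≤ N) (by omega)
  -- Step 1 : row of the max entry is 0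
  have hrow0 : (cellOf (paddedCells μ N) T N).1 = 0 := by
    by_contra h
    have h1 : 1 ≤ (cellOf (paddedCells μ N) T N).1 := by omega
    -- every entry in [s+1, N] lies in a row ≥ 1
    have hrows : ∀ i ∈ Finset.Icc (s + 1) N, 1 ≤ (cellOf (paddedCells μ N) T i).1 := by
      intro i hi
      rw [Finset.mem_Icc] at hi
      have hthis : (cellOf (paddedCells μ N) T N).1 ≤ (cellOf (paddedCells μ N) T i).1 :=
        row_le_of_no_descent hT (by omega : 1 ≤ i) hi.2 (by omega)
          (fun k hk1 hk2 hkD => absurd (descent_le_majN hT hkD) (by omega))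
      omega
    -- injection from Icc (s+1) N into μ.cells
    have hle : (Finset.Icc (s + 1) N).card ≤ μ.cells.card := by
      apply Finset.card_le_card_of_injOn
        (fun i => ((cellOf (paddedCells μ N) T i).1 - 1, (cellOf (paddedCells μ N) T i).2))
      · intro i hi
        rw [Finset.mem_coe, Finset.mem_Icc] at hi
        obtain ⟨him, hiv⟩ := cellOf_spec hT (show 1 ≤ i by omega)
          (show i ≤ (paddedCells μ N).card by omega)
        have hro := hrows i (Finset.mem_Icc.mpr hi)
        rcases mem_paddedCells.mp him with ⟨h0, -⟩ | ⟨-, hm⟩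
        · omega
        · exact hm
      · intro i hi j hj he
        simp only [Finset.coe_Icc, Set.mem_Icc] at hi hj
        obtain ⟨him, hiv⟩ := cellOf_spec hT (show 1 ≤ i by omega)
          (show i ≤ (paddedCells μ N).card by omega)
        obtain ⟨hjm, hjv⟩ := cellOf_spec hT (show 1 ≤ j by omega)
          (show j ≤ (paddedCells μ N).card by omega)
        have hri := hrows i (Finset.mem_Icc.mpr hi)
        have hrj := hrows j (Finset.mem_Icc.mpr hj)
        have he' : (cellOf (paddedCells μ N) T i).1 - 1 = (cellOf (paddedCells μ N) T j).1 - 1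
            ∧ (cellOf (paddedCells μ N) T i).2 = (cellOf (paddedCells μ N) T j).2 := by
          simpa [Prod.ext_iff] using he
        have hceq : cellOf (paddedCells μ N) T i = cellOf (paddedCells μ N) T j := by
          rw [Prod.ext_iff]
          exact ⟨by omega, he'.2⟩
        rw [← hiv, ← hjv, hceq]
    rw [Nat.card_Icc] at hle
    have : μ.cells.card = μ.card := rfl
    omega
  -- Step 2 : the max entry is at the end of row 0
  have hcol : (cellOf (paddedCells μ N) T N).2 < N - μ.card := by
    rcases mem_paddedCells.mp hmem with ⟨-, h⟩ | ⟨h1, -⟩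
    · exact h
    · omega
  have hend : ¬ (cellOf (paddedCells μ N) T N).2 < N - μ.card - 1 := by
    intro hlt
    have hcell : ((0 : ℕ), N - μ.card - 1) ∈ paddedCells μ N :=
      mem_paddedCells.mpr (Or.inl ⟨rfl, by omega⟩)
    have := hT.row_strict _ hmem _ hcell (by rw [hrow0]) (by simpa using hlt)
    have h2 := Set.mem_Icc.mp (hT.bijOn.mapsTo hcell)
    omega
  rw [Prod.ext_iff]
  exact ⟨hrow0, by omega⟩

lemma not_mem_paddedCells_corner (hn : μ.card + μ.rowLen 0 ≤ n) :
    ((0 : ℕ), n - μ.card) ∉ paddedCells μ n := by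
  intro h
  rcases mem_paddedCells.mp h with ⟨-, h2⟩ | ⟨h1, -⟩
  · omega
  · omega

lemma paddedCells_succ (hn : μ.card ≤ n) :
    paddedCells μ (n + 1) = insert ((0 : ℕ), n - μ.card) (paddedCells μ n) := by
  ext c
  rw [Finset.mem_insert, mem_paddedCells, mem_paddedCells]
  constructor
  · rintro (⟨h0, h2⟩ | h)
    · rcases Nat.lt_or_ge c.2 (n - μ.card) with h | h
      · exact Or.inr (Or.inl ⟨h0, h⟩)
      · left
        rw [Prod.ext_iff]
        constructor
        · exact h0
        · simp only []
          omega
    · exact Or.inr (Or.inr h)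
  · rintro (h | ⟨h0, h2⟩ | h)
    · subst h
      exact Or.inl ⟨rfl, by simp; omega⟩
    · exact Or.inl ⟨h0, by omega⟩
    · exact Or.inr h
end

section
variable {μ : YoungDiagram} {n : ℕ} {T : ℕ × ℕ → ℕ}

lemma col_lt_of_mem (hn : μ.card + μ.rowLen 0 ≤ n) {c : ℕ × ℕ}
    (hc : c ∈ paddedCells μ n) : c.2 < n - μ.card := by
  rcases mem_paddedCells.mp hc with ⟨-, h⟩ | ⟨h1, hm⟩
  · exact h
  · have h2 : c.2 < μ.rowLen (c.1 - 1) := YoungDiagram.mem_iff_lt_rowLen.mp hm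
    have h3 := μ.rowLen_anti 0 (c.1 - 1) (Nat.zero_le _)
    omega

lemma update_forward (hT : IsSYT (paddedCells μ n) T) (hn : μ.card + μ.rowLen 0 ≤ n) :
    IsSYT (paddedCells μ (n + 1)) (Function.update T (0, n - μ.card) (n + 1)) ∧
      descents (paddedCells μ (n + 1)) (Function.update T (0, n - μ.card) (n + 1)) =
        descents (paddedCells μ n) T := by
  have hcard : (paddedCells μ n).card = n := card_paddedCells (by omega)
  have hcard1 : (paddedCells μ (n + 1)).card = n + 1 := card_paddedCells (by omega)
  set w : ℕ × ℕ := (0, n - μ.card) with hw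
  have hw1 : w.1 = 0 := rfl
  have hw2 : w.2 = n - μ.card := rfl
  set T' := Function.update T w (n + 1) with hT'
  have hwne : w ∉ paddedCells μ n := not_mem_paddedCells_corner hn
  have hsucc : paddedCells μ (n + 1) = insert w (paddedCells μ n) :=
    paddedCells_succ (by omega)
  have hTw : T' w = n + 1 := Function.update_self _ _ _
  have hTold : ∀ c ∈ paddedCells μ n, T' c = T c := by
    intro c hc
    exact Function.update_of_ne (fun h => hwne (by rw [← h]; exact hc)) _ _
  have hmemold : ∀ c ∈ paddedCells μ (n+1), c ≠ w → c ∈ paddedCells μ n := by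
    intro c hc hne
    rw [hsucc, Finset.mem_insert] at hc
    tauto
  have hbij : Set.BijOn T' ↑(paddedCells μ (n + 1)) (Set.Icc 1 (paddedCells μ (n+1)).card) := by
    rw [hcard1, hsucc]
    have h1 : Set.BijOn T' ↑(paddedCells μ n) (Set.Icc 1 n) := by
      have := hT.bijOn
      rw [hcard] at this
      exact this.congr (fun c hc => (hTold c hc).symm)
    have h2 : Set.BijOn T' (insert w ↑(paddedCells μ n)) (insert (T' w) (Set.Icc 1 n)) :=
      h1.insert (by rw [hTw]; simp)
    rw [hTw] at h2
    have h3 : insert ((n:ℕ) + 1) (Set.Icc 1 n) = Set.Icc 1 (n + 1) := by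
      ext x
      simp only [Set.mem_insert_iff, Set.mem_Icc]
      omega
    rw [h3] at h2
    rw [Finset.coe_insert]
    exact h2
  have hvals : ∀ c ∈ paddedCells μ n, T c ≤ n := by
    intro c hc
    have := Set.mem_Icc.mp (hT.bijOn.mapsTo hc)
    omega
  have hvals1 : ∀ c ∈ paddedCells μ n, 1 ≤ T c := by
    intro c hc
    exact (Set.mem_Icc.mp (hT.bijOn.mapsTo hc)).1
  refine ⟨⟨hbij, ?_, ?_, ?_⟩, ?_⟩
  · -- row_strict
    intro c1 hc1 c2 hc2 hrow hcol
    by_cases h2 : c2 = w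
    · subst h2
      have h1 : c1 ≠ w := fun h => by rw [h] at hcol; omega
      have hc1' := hmemold c1 hc1 h1
      rw [hTw, hTold c1 hc1']
      have := hvals c1 hc1'
      omega
    · have hc2' := hmemold c2 hc2 h2
      have h1 : c1 ≠ w := by
        intro h
        subst h
        have := col_lt_of_mem hn hc2'
        omega
      have hc1' := hmemold c1 hc1 h1
      rw [hTold c1 hc1', hTold c2 hc2']
      exact hT.row_strict c1 hc1' c2 hc2' hrow hcol
  · -- col_strict
    intro c1 hc1 c2 hc2 hcol hrow
    have h2 : c2 ≠ w := by
      intro h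
      rw [h] at hrow
      exact absurd hrow (by omega)
    have hc2' := hmemold c2 hc2 h2
    have h1 : c1 ≠ w := by
      intro h
      subst h
      have := col_lt_of_mem hn hc2'
      omega
    have hc1' := hmemold c1 hc1 h1
    rw [hTold c1 hc1', hTold c2 hc2']
    exact hT.col_strict c1 hc1' c2 hc2' hcol hrow
  · -- zeros
    intro c hc
    rw [hsucc, Finset.mem_insert] at hc
    push_neg at hc
    rw [hT', Function.update_of_ne hc.1]
    exact hT.zeros c hc.2
  · -- descents equal
    ext i
    simp only [descents, Finset.mem_filter, Finset.mem_range, hcard, hcard1]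
    constructor
    · rintro ⟨hir, c1, hm1, c2, hm2, he1, he2, hlt⟩
      have h2 : c2 ≠ w := by
        intro h
        rw [h] at hlt
        exact absurd hlt (by omega)
      have hc2' := hmemold c2 hm2 h2
      have h1 : c1 ≠ w := by
        intro h
        rw [h, hTw] at he1
        have := hvals c2 hc2'
        rw [hTold c2 hc2'] at he2
        omega
      have hc1' := hmemold c1 hm1 h1
      rw [hTold c1 hc1'] at he1
      rw [hTold c2 hc2'] at he2
      have := hvals c2 hc2'
      exact ⟨by omega, c1, hc1', c2, hc2', he1, he2, hlt⟩
    · rintro ⟨hir, c1, hm1, c2, hm2, he1, he2, hlt⟩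
      refine ⟨by omega, c1, ?_, c2, ?_, ?_, ?_, hlt⟩
      · rw [hsucc]; exact Finset.mem_insert_of_mem hm1
      · rw [hsucc]; exact Finset.mem_insert_of_mem hm2
      · rw [hTold c1 hm1]; exact he1
      · rw [hTold c2 hm2]; exact he2

lemma update_backward (hT' : IsSYT (paddedCells μ (n + 1)) T)
    (hn : μ.card + μ.rowLen 0 ≤ n) (hw : T (0, n - μ.card) = n + 1) :
    IsSYT (paddedCells μ n) (Function.update T (0, n - μ.card) 0) ∧
      T = Function.update (Function.update T (0, n - μ.card) 0) (0, n - μ.card) (n + 1) := by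
  have hcard : (paddedCells μ n).card = n := card_paddedCells (by omega)
  have hcard1 : (paddedCells μ (n + 1)).card = n + 1 := card_paddedCells (by omega)
  set w : ℕ × ℕ := (0, n - μ.card) with hww
  have hw1 : w.1 = 0 := rfl
  have hw2 : w.2 = n - μ.card := rfl
  set T0 := Function.update T w 0 with hT0
  have hwne : w ∉ paddedCells μ n := not_mem_paddedCells_corner hn
  have hsucc : paddedCells μ (n + 1) = insert w (paddedCells μ n) :=
    paddedCells_succ (by omega)
  have hwmem : w ∈ paddedCells μ (n + 1) := by rw [hsucc]; exact Finset.mem_insert_self _ _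
  have hsub : ∀ c ∈ paddedCells μ n, c ∈ paddedCells μ (n + 1) := by
    intro c hc; rw [hsucc]; exact Finset.mem_insert_of_mem hc
  have hTold : ∀ c ∈ paddedCells μ n, T0 c = T c := by
    intro c hc
    exact Function.update_of_ne (fun h => hwne (by rw [← h]; exact hc)) _ _
  have hne : ∀ c ∈ paddedCells μ n, c ≠ w := fun c hc h => hwne (by rw [← h]; exact hc)
  have hvne : ∀ c ∈ paddedCells μ n, T c ≠ n + 1 := by
    intro c hc h
    have := hT'.bijOn.injOn (hsub c hc) hwmem (by rw [h, hw])
    exact hne c hc this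
  have hvle : ∀ c ∈ paddedCells μ n, T c ∈ Set.Icc 1 n := by
    intro c hc
    have h1 := Set.mem_Icc.mp (hT'.bijOn.mapsTo (hsub c hc))
    rw [hcard1] at h1
    have := hvne c hc
    exact Set.mem_Icc.mpr ⟨h1.1, by omega⟩
  constructor
  · refine ⟨?_, ?_, ?_, ?_⟩
    · rw [hcard]
      refine Set.BijOn.mk ?_ ?_ ?_
      · intro c hc
        rw [hTold c hc]
        exact hvle c hc
      · intro c1 h1 c2 h2 he
        rw [hTold c1 h1, hTold c2 h2] at he
        exact hT'.bijOn.injOn (hsub c1 h1) (hsub c2 h2) he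
      · intro i hi
        have hi' : i ∈ Set.Icc 1 (paddedCells μ (n+1)).card := by
          rw [hcard1]
          have := Set.mem_Icc.mp hi
          exact Set.mem_Icc.mpr ⟨this.1, by omega⟩
        obtain ⟨c, hc, hTc⟩ := hT'.bijOn.surjOn hi'
        have hcnw : c ≠ w := by
          intro h
          rw [h, hw] at hTc
          have := Set.mem_Icc.mp hi
          omega
        have hc' : c ∈ paddedCells μ n := by
          have : c ∈ paddedCells μ (n+1) := hc
          rw [hsucc, Finset.mem_insert] at this
          tauto
        exact ⟨c, hc', by rw [hTold c hc']; exact hTc⟩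
    · intro c1 h1 c2 h2 hrow hcol
      rw [hTold c1 h1, hTold c2 h2]
      exact hT'.row_strict c1 (hsub c1 h1) c2 (hsub c2 h2) hrow hcol
    · intro c1 h1 c2 h2 hcol hrow
      rw [hTold c1 h1, hTold c2 h2]
      exact hT'.col_strict c1 (hsub c1 h1) c2 (hsub c2 h2) hcol hrow
    · intro c hc
      by_cases h : c = w
      · rw [h, hT0]; exact Function.update_self _ _ _
      · rw [hT0, Function.update_of_ne h]
        apply hT'.zeros
        rw [hsucc, Finset.mem_insert]
        push_neg
        exact ⟨h, hc⟩
  · funext c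
    by_cases h : c = w
    · rw [h, Function.update_self, hw]
    · rw [Function.update_of_ne h, hT0, Function.update_of_ne h]
end

/-- for fixed `m ≥ 0`, `s ≥ 0` and a partition `μ`,
`|B(n)| = |B(n+1)|` for every `n > max (2s + m + 1) (|μ| + μ₁)`. -/
theorem stmt1 (m s : ℕ) (μ : YoungDiagram) (n : ℕ)
    (hn : max (2 * s + m + 1) (μ.card + μ.rowLen 0) < n) :
    (setB μ m s n).ncard = (setB μ m s (n + 1)).ncard := by
  have h1 : 2 * s + m + 1 < n := lt_of_le_of_lt (le_max_left _ _) hn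
  have h2 : μ.card + μ.rowLen 0 < n := lt_of_le_of_lt (le_max_right _ _) hn
  have h2' : μ.card + μ.rowLen 0 ≤ n := le_of_lt h2
  have hcard1 : (paddedCells μ (n + 1)).card = n + 1 := card_paddedCells (by omega)
  set w : ℕ × ℕ := (0, n - μ.card) with hw
  have hwne : w ∉ paddedCells μ n := not_mem_paddedCells_corner h2'
  set F : ((ℕ × ℕ → ℕ) × (ℕ → ℕ)) → ((ℕ × ℕ → ℕ) × (ℕ → ℕ)) :=
    fun Tν => (Function.update Tν.1 w (n + 1), Tν.2) with hF
  have hinj : Set.InjOn F (setB μ m s n) := by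
    intro a ha b hb heq
    simp only [hF, Prod.mk.injEq] at heq
    have ha1 : IsSYT (paddedCells μ n) a.1 := ha.1
    have hb1 : IsSYT (paddedCells μ n) b.1 := hb.1
    have hfst : a.1 = b.1 := by
      funext c
      by_cases h : c = w
      · rw [h, ha1.zeros w hwne, hb1.zeros w hwne]
      · have := congrFun heq.1 c
        rwa [Function.update_of_ne h, Function.update_of_ne h] at this
    exact Prod.ext hfst heq.2
  have himg : F '' setB μ m s n = setB μ m s (n + 1) := by
    apply Set.Subset.antisymm
    · rintro _ ⟨x, hx, rfl⟩
      obtain ⟨hSYT, hdes, hanti, hzero, hlem, hsum⟩ := hx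
      obtain ⟨hSYT', hdeq⟩ := update_forward hSYT h2'
      have hdesEq : desN (paddedCells μ (n+1)) (Function.update x.1 w (n+1)) =
          desN (paddedCells μ n) x.1 := by
        simp only [desN, hw, hdeq]
      have hmajEq : majN (paddedCells μ (n+1)) (Function.update x.1 w (n+1)) =
          majN (paddedCells μ n) x.1 := by
        simp only [majN, hw, hdeq]
      refine ⟨hSYT', ?_, hanti, ?_, hlem, ?_⟩
      · rw [hdesEq]; omega
      · intro i hi
        rw [hdesEq] at hi
        exact hzero i (by omega)
      · rw [hmajEq]
        have hr : n + 1 - m = (n - m) + 1 := by omega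
        rw [hr, Finset.sum_range_succ, hzero (n - m) (by omega), Nat.add_zero]
        exact hsum
    · intro x hx
      obtain ⟨hSYT', hdes', hanti, hzero', hlem, hsum'⟩ := hx
      have hmaj' : majN (paddedCells μ (n+1)) x.1 ≤ s := by omega
      have hμs : μ.card ≤ s := le_trans (card_le_majN hSYT' (by omega)) hmaj'
      -- the entry n+1 sits at the corner w
      have hcor : x.1 w = n + 1 := by
        have hcm := cellOf_max_eq hSYT' (by omega : μ.card + μ.rowLen 0 ≤ n + 1)
          hmaj' (by omega : 2 * s + 1 ≤ n + 1)
        obtain ⟨hmem, hval⟩ := cellOf_spec hSYT' (show 1 ≤ n + 1 by omega)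
          (show n + 1 ≤ (paddedCells μ (n+1)).card by omega)
        have hweq : ((0 : ℕ), n + 1 - μ.card - 1) = w := by
          rw [hw]
          congr 1
          omega
        rw [hcm, hweq] at hval
        exact hval
      obtain ⟨hSYT0, hTrec⟩ := update_backward hSYT' h2' hcor
      set T0 := Function.update x.1 w 0 with hT0
      obtain ⟨-, hdeq⟩ := update_forward hSYT0 h2'
      have hdeq' : descents (paddedCells μ (n+1)) x.1 = descents (paddedCells μ n) T0 := by
        rw [hTrec]
        exact hdeq
      have hdesEq : desN (paddedCells μ (n+1)) x.1 = desN (paddedCells μ n) T0 := by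
        simp only [desN, hdeq']
      have hmajEq : majN (paddedCells μ (n+1)) x.1 = majN (paddedCells μ n) T0 := by
        simp only [majN, hdeq']
      have hdes0 : desN (paddedCells μ n) T0 ≤ s := by
        have := desN_le_majN hSYT0
        omega
      -- the extra vanishing part
      have hz : x.2 (n - m - desN (paddedCells μ n) T0 - 1) = 0 := by
        by_contra hpos
        set j := n - m - desN (paddedCells μ n) T0 - 1 with hj
        have hpos' : 1 ≤ x.2 j := by omega
        have hsum1 : j + 1 ≤ ∑ i ∈ Finset.range (j + 1), x.2 i := by
          have : ∀ i ∈ Finset.range (j + 1), 1 ≤ x.2 i := by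
            intro i hi
            rw [Finset.mem_range] at hi
            exact le_trans hpos' (hanti (by omega))
          calc j + 1 = ∑ _i ∈ Finset.range (j + 1), 1 := by simp
            _ ≤ ∑ i ∈ Finset.range (j + 1), x.2 i := Finset.sum_le_sum this
        have hsub : Finset.range (j + 1) ⊆ Finset.range (n + 1 - m) :=
          Finset.range_subset_range.mpr (by omega)
        have hsum2 : ∑ i ∈ Finset.range (j + 1), x.2 i ≤
            ∑ i ∈ Finset.range (n + 1 - m), x.2 i :=
          Finset.sum_le_sum_of_subset hsub
        omega
      refine ⟨⟨T0, x.2⟩, ⟨hSYT0, ?_, hanti, ?_, hlem, ?_⟩, ?_⟩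
      · dsimp only
        omega
      · intro i hi
        dsimp only at hi ⊢
        have : x.2 i ≤ x.2 (n - m - desN (paddedCells μ n) T0 - 1) := hanti hi
        omega
      · dsimp only
        rw [← hmajEq]
        have hν0 : x.2 (n - m) = 0 := by
          apply hzero' (n - m)
          omega
        have hr : n + 1 - m = (n - m) + 1 := by omega
        rw [hr, Finset.sum_range_succ, hν0, Nat.add_zero] at hsum'
        exact hsum'
      · rw [hF]
        dsimp only
        rw [← hTrec]
  rw [← himg, Set.ncard_image_of_injOn hinj]
end

section
/- Let μ be a partition, s ≥ 0 an integer, and n an integer with n > 2s and n ≥ |μ| + μ_1. Then the map φ, which adds a box labeled n+1 at the end of the first row, is a bijection from the set { T a standard Young tableau of shape μ[n] : maj(T) ≤ s } onto the set { U a standard Young tableau of shape μ[n+1] : maj(U) ≤ s }. -/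
section Aux

variable {μ : YoungDiagram} {n s : ℕ}

lemma mem_padded {c : ℕ × ℕ} :
    c ∈ paddedCells μ n ↔
      (c.1 = 0 ∧ c.2 < n - μ.card) ∨ (1 ≤ c.1 ∧ (c.1 - 1, c.2) ∈ μ) := by
  obtain ⟨i, j⟩ := c
  unfold paddedCells
  simp only [Finset.mem_union, Finset.mem_image, Finset.mem_range,
    YoungDiagram.mem_cells, Prod.mk.injEq]
  constructor
  · rintro (⟨k, hk, h0, rfl⟩ | ⟨⟨a, b⟩, hab, h1, h2⟩)
    · exact Or.inl ⟨h0.symm, hk⟩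
    · subst h2
      refine Or.inr ⟨by omega, ?_⟩
      have : i - 1 = a := by omega
      rwa [this]
  · rintro (⟨h0, hj⟩ | ⟨h1, hm⟩)
    · exact Or.inl ⟨j, hj, h0.symm, rfl⟩
    · exact Or.inr ⟨(i - 1, j), hm, by omega, rfl⟩

lemma card_padded (h : μ.card ≤ n) : (paddedCells μ n).card = n := by
  unfold paddedCells
  have hinj1 : Function.Injective (fun j : ℕ => ((0 : ℕ), j)) := by
    intro a b hab
    simpa using hab
  have hinj2 : Function.Injective (fun c : ℕ × ℕ => (c.1 + 1, c.2)) := by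
    rintro ⟨a, b⟩ ⟨c, d⟩ hab
    simpa using hab
  have hdisj : Disjoint ((Finset.range (n - μ.card)).image fun j => ((0 : ℕ), j))
      (μ.cells.image fun c => (c.1 + 1, c.2)) := by
    rw [Finset.disjoint_left]
    intro a ha hb
    simp only [Finset.mem_image, Finset.mem_range] at ha hb
    obtain ⟨j, _, rfl⟩ := ha
    obtain ⟨c, _, hce⟩ := hb
    exact absurd (congrArg Prod.fst hce) (by simp)
  rw [Finset.card_union_of_disjoint hdisj, Finset.card_image_of_injective _ hinj1,
    Finset.card_image_of_injective _ hinj2, Finset.card_range]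
  have hcc : μ.cells.card = μ.card := rfl
  omega

lemma padded_succ (h : μ.card ≤ n) :
    paddedCells μ (n + 1) = insert (0, n - μ.card) (paddedCells μ n) := by
  unfold paddedCells
  have : n + 1 - μ.card = (n - μ.card) + 1 := by omega
  rw [this, Finset.range_add_one, Finset.image_insert, Finset.insert_union]

lemma corner_not_mem : ((0 : ℕ), n - μ.card) ∉ paddedCells μ n := by
  intro h
  rcases mem_padded.mp h with ⟨_, h2⟩ | ⟨h1, _⟩
  · omega
  · omega

lemma padded_up (h2 : μ.card + μ.rowLen 0 ≤ n) {i j : ℕ}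
    (h : (i + 1, j) ∈ paddedCells μ n) : (i, j) ∈ paddedCells μ n := by
  rcases mem_padded.mp h with ⟨h0, _⟩ | ⟨_, hm⟩
  · omega
  · simp only at hm
    have hm' : (i, j) ∈ μ := by
      have : i + 1 - 1 = i := by omega
      rwa [this] at hm
    rcases Nat.eq_zero_or_pos i with rfl | hi
    · refine mem_padded.mpr (Or.inl ⟨rfl, ?_⟩)
      have hlt : j < μ.rowLen 0 := YoungDiagram.mem_iff_lt_rowLen.mp hm'
      omega
    · refine mem_padded.mpr (Or.inr ⟨hi, ?_⟩)
      exact μ.up_left_mem (by omega) le_rfl hm'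

lemma val_bounds {T : ℕ × ℕ → ℕ} (hT : IsSYT (paddedCells μ n) T)
    (h : μ.card ≤ n) {c : ℕ × ℕ} (hc : c ∈ paddedCells μ n) :
    1 ≤ T c ∧ T c ≤ n := by
  have := hT.bijOn.mapsTo (Finset.mem_coe.mpr hc)
  rw [card_padded h] at this
  exact this

lemma descents_update (h2 : μ.card + μ.rowLen 0 ≤ n) {T : ℕ × ℕ → ℕ}
    (hT : IsSYT (paddedCells μ n) T) :
    descents (paddedCells μ (n + 1)) (Function.update T (0, n - μ.card) (n + 1))
      = descents (paddedCells μ n) T := by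
  have hc : μ.card ≤ n := le_trans (Nat.le_add_right _ _) h2
  have hins := padded_succ (μ := μ) hc
  have hnm := corner_not_mem (μ := μ) (n := n)
  have hcardn := card_padded (μ := μ) hc
  have hcard1 : (paddedCells μ (n + 1)).card = n + 1 :=
    card_padded (le_trans hc (Nat.le_succ n))
  have hUeq : ∀ c ∈ paddedCells μ n,
      Function.update T (0, n - μ.card) (n + 1) c = T c := by
    intro c hc'
    have hne : c ≠ ((0 : ℕ), n - μ.card) := by
      rintro rfl; exact hnm hc'
    exact Function.update_of_ne hne _ _
  ext i
  unfold descents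
  simp only [Finset.mem_filter, Finset.mem_range, hcardn, hcard1]
  constructor
  · rintro ⟨hi, c1, h1, c2, h2', e1, e2, hlt⟩
    rw [hins, Finset.mem_insert] at h1 h2'
    have h2P : c2 ∈ paddedCells μ n := by
      rcases h2' with rfl | h2'
      · exfalso; omega
      · exact h2'
    rw [hUeq c2 h2P] at e2
    have hb2 := val_bounds hT hc h2P
    have h1P : c1 ∈ paddedCells μ n := by
      rcases h1 with rfl | h1
      · exfalso
        rw [Function.update_self] at e1
        omega
      · exact h1
    rw [hUeq c1 h1P] at e1
    have hb1 := val_bounds hT hc h1P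
    exact ⟨by omega, c1, h1P, c2, h2P, e1, e2, hlt⟩
  · rintro ⟨hi, c1, h1, c2, h2', e1, e2, hlt⟩
    refine ⟨by omega, c1, ?_, c2, ?_, ?_, ?_, hlt⟩
    · rw [hins]; exact Finset.mem_insert_of_mem h1
    · rw [hins]; exact Finset.mem_insert_of_mem h2'
    · rw [hUeq c1 h1]; exact e1
    · rw [hUeq c2 h2']; exact e2

lemma isSYT_update (h2 : μ.card + μ.rowLen 0 ≤ n) {T : ℕ × ℕ → ℕ}
    (hT : IsSYT (paddedCells μ n) T) :
    IsSYT (paddedCells μ (n + 1)) (Function.update T (0, n - μ.card) (n + 1)) := by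
  have hc : μ.card ≤ n := le_trans (Nat.le_add_right _ _) h2
  have hins := padded_succ (μ := μ) hc
  have hnm := corner_not_mem (μ := μ) (n := n)
  have hcardn := card_padded (μ := μ) hc
  have hcard1 : (paddedCells μ (n + 1)).card = n + 1 :=
    card_padded (le_trans hc (Nat.le_succ n))
  have hUeq : ∀ c ∈ paddedCells μ n,
      Function.update T (0, n - μ.card) (n + 1) c = T c := by
    intro c hc'
    have hne : c ≠ ((0 : ℕ), n - μ.card) := by
      rintro rfl; exact hnm hc'
    exact Function.update_of_ne hne _ _
  constructor
  · rw [hcard1, hins, Finset.coe_insert]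
    have hbij : Set.BijOn (Function.update T (0, n - μ.card) (n + 1))
        ↑(paddedCells μ n) (Set.Icc 1 n) := by
      have hb := hT.bijOn
      rw [hcardn] at hb
      exact hb.congr (fun c hc' => (hUeq c (Finset.mem_coe.mp hc')).symm)
    have hins2 := hbij.insert (a := (0, n - μ.card))
      (by rw [Function.update_self]; simp)
    rw [Function.update_self] at hins2
    have : insert (n + 1) (Set.Icc 1 n) = Set.Icc 1 (n + 1) := by
      ext x
      simp only [Set.mem_insert_iff, Set.mem_Icc]
      omega
    rwa [this] at hins2
  · intro c1 h1 c2 h2' hrow hcol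
    rw [hins, Finset.mem_insert] at h1 h2'
    rcases h2' with rfl | h2'
    · rcases h1 with rfl | h1
      · exact absurd hcol (lt_irrefl _)
      · rw [Function.update_self, hUeq c1 h1]
        have := (val_bounds hT hc h1).2
        omega
    · rcases h1 with rfl | h1
      · exfalso
        rcases mem_padded.mp h2' with ⟨_, hlt⟩ | ⟨hge, _⟩
        · have hcol' : n - μ.card < c2.2 := hcol
          omega
        · have hrow' : (0 : ℕ) = c2.1 := hrow
          omega
      · rw [hUeq c1 h1, hUeq c2 h2']
        exact hT.row_strict c1 h1 c2 h2' hrow hcol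
  · intro c1 h1 c2 h2' hcoleq hlt
    rw [hins, Finset.mem_insert] at h1 h2'
    rcases h2' with rfl | h2'
    · exfalso
      have : c1.1 < 0 := hlt
      omega
    · rcases h1 with rfl | h1
      · exfalso
        rcases mem_padded.mp h2' with ⟨h0, _⟩ | ⟨hge, hmem⟩
        · have hlt' : (0 : ℕ) < c2.1 := hlt
          omega
        · have hlen : c2.2 < μ.rowLen (c2.1 - 1) :=
            YoungDiagram.mem_iff_lt_rowLen.mp hmem
          have hanti : μ.rowLen (c2.1 - 1) ≤ μ.rowLen 0 :=
            μ.rowLen_anti 0 (c2.1 - 1) (Nat.zero_le _)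
          have hceq : n - μ.card = c2.2 := hcoleq
          omega
      · rw [hUeq c1 h1, hUeq c2 h2']
        exact hT.col_strict c1 h1 c2 h2' hcoleq hlt
  · intro c hcn
    rw [hins, Finset.mem_insert] at hcn
    push_neg at hcn
    rw [Function.update_of_ne hcn.1]
    exact hT.zeros c hcn.2

lemma max_at_corner (hn1 : 2 * s < n) (h2 : μ.card + μ.rowLen 0 ≤ n)
    {U : ℕ × ℕ → ℕ} (hU : IsSYT (paddedCells μ (n + 1)) U)
    (hm : majN (paddedCells μ (n + 1)) U ≤ s) :
    U (0, n - μ.card) = n + 1 := by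
  classical
  have hc : μ.card ≤ n := le_trans (Nat.le_add_right _ _) h2
  set P := paddedCells μ (n + 1) with hP
  have hcard : P.card = n + 1 := card_padded (le_trans hc (Nat.le_succ n))
  have hval : ∀ c ∈ P, 1 ≤ U c ∧ U c ≤ n + 1 := by
    intro c hcm
    have := hU.bijOn.mapsTo (Finset.mem_coe.mpr hcm)
    rw [hcard] at this
    exact this
  obtain ⟨cmax, hcm, hcv⟩ : ∃ c ∈ P, U c = n + 1 := by
    have hmem : (n + 1) ∈ Set.Icc 1 P.card := by
      rw [hcard]; exact ⟨by omega, le_rfl⟩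
    obtain ⟨c, hc', he⟩ := hU.bijOn.surjOn hmem
    exact ⟨c, Finset.mem_coe.mp hc', he⟩
  have hdle : ∀ d ∈ descents P U, d ≤ s := fun d hd =>
    le_trans (Finset.single_le_sum (fun i _ => Nat.zero_le i) hd) hm
  -- rows weakly decrease on values ≥ s+1
  have mono : ∀ v, s + 1 ≤ v → ∀ w, v ≤ w → w ≤ n + 1 →
      ∀ c1 ∈ P, ∀ c2 ∈ P, U c1 = v → U c2 = w → c2.1 ≤ c1.1 := by
    intro v hv w hvw
    induction w, hvw using Nat.le_induction with
    | base =>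
      intro _ c1 h1 c2 h2' e1 e2
      have : c1 = c2 := hU.bijOn.injOn (Finset.mem_coe.mpr h1)
        (Finset.mem_coe.mpr h2') (by rw [e1, e2])
      rw [this]
    | succ w hw ih =>
      intro hw1 c1 h1 c2 h2' e1 e2
      have hwn : w ≤ n + 1 := by omega
      obtain ⟨cw, hcwm, hcwv⟩ : ∃ c ∈ P, U c = w := by
        have hmem : w ∈ Set.Icc 1 P.card := by
          rw [hcard]; exact ⟨by omega, hwn⟩
        obtain ⟨c, hc', he⟩ := hU.bijOn.surjOn hmem
        exact ⟨c, Finset.mem_coe.mp hc', he⟩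
      have hnd : w ∉ descents P U := fun hmem => by
        have := hdle w hmem; omega
      have hnlt : ¬ (cw.1 < c2.1) := by
        intro hlt
        apply hnd
        unfold descents
        rw [Finset.mem_filter]
        exact ⟨Finset.mem_range.mpr (by omega), cw, hcwm, c2, h2', hcwv, by rw [e2], hlt⟩
      have := ih hwn c1 h1 cw hcwm e1 hcwv
      omega
  have hrow0 : cmax.1 = 0 := by
    by_contra hr
    have hr1 : 1 ≤ cmax.1 := Nat.one_le_iff_ne_zero.mpr hr
    set Sm := P.filter (fun c => U c ≤ s) with hSm
    set Bg := P.filter (fun c => ¬ U c ≤ s) with hBg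
    have hsum : Sm.card + Bg.card = n + 1 := by
      rw [hSm, hBg, Finset.card_filter_add_card_filter_not, hcard]
    have hSmle : Sm.card ≤ s := by
      have hle : Sm.card ≤ (Finset.Icc 1 s).card := by
        apply Finset.card_le_card_of_injOn U
        · intro c hc'
          rw [Finset.mem_coe, Finset.mem_filter] at hc'
          exact Finset.mem_Icc.mpr ⟨(hval c hc'.1).1, hc'.2⟩
        · intro a ha b hb e
          rw [Finset.mem_coe, hSm, Finset.mem_filter] at ha hb
          exact hU.bijOn.injOn (Finset.mem_coe.mpr ha.1) (Finset.mem_coe.mpr hb.1) e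
      rwa [Nat.card_Icc, Nat.add_sub_cancel] at hle
    have hmap : ∀ c ∈ Bg, (c.1 - 1, c.2) ∈ Sm ∧ 1 ≤ c.1 := by
      intro c hcB
      rw [hBg, Finset.mem_filter] at hcB
      obtain ⟨hcP, hcbig⟩ := hcB
      have hbv : s + 1 ≤ U c := by omega
      have hub := (hval c hcP).2
      have hpos : 1 ≤ c.1 :=
        le_trans hr1 (mono (U c) hbv (n + 1) hub le_rfl c hcP cmax hcm rfl hcv)
      obtain ⟨k, hk⟩ : ∃ k, c.1 = k + 1 := ⟨c.1 - 1, by omega⟩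
      have hcP' : (k + 1, c.2) ∈ paddedCells μ (n + 1) := by
        rw [← hk, Prod.mk.eta]; exact hcP
      have hup : (k, c.2) ∈ P := padded_up (by omega) hcP'
      have hcol : U (k, c.2) < U c := by
        have := hU.col_strict (k, c.2) hup c hcP rfl (by omega)
        exact this
      have hsm : U (k, c.2) ≤ s := by
        by_contra hbig2
        have h2big : s + 1 ≤ U (k, c.2) := by omega
        have := mono (U (k, c.2)) h2big (U c) (le_of_lt hcol) hub
          (k, c.2) hup c hcP rfl rfl
        simp only at this
        omega
      have hkc : ((c.1 - 1 : ℕ), c.2) = (k, c.2) := by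
        rw [hk]; simp
      refine ⟨?_, hpos⟩
      rw [hSm, Finset.mem_filter, hkc]
      exact ⟨hup, hsm⟩
    have hBgle : Bg.card ≤ Sm.card := by
      apply Finset.card_le_card_of_injOn (fun c => (c.1 - 1, c.2))
      · intro c hc'
        exact (hmap c hc').1
      · intro a ha b hb e
        have h1 := (hmap a (Finset.mem_coe.mp ha)).2
        have h2' := (hmap b (Finset.mem_coe.mp hb)).2
        have e' := Prod.ext_iff.mp e
        simp only at e'
        exact Prod.ext (by omega) e'.2
    omega
  have hcol2 : cmax.2 = n - μ.card := by
    have hmm : (cmax.1, cmax.2) ∈ paddedCells μ (n + 1) := by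
      rw [Prod.mk.eta]; exact hcm
    have hj : cmax.2 < n + 1 - μ.card := by
      rcases mem_padded.mp hcm with ⟨_, h⟩ | ⟨h1, _⟩
      · exact h
      · omega
    by_contra hne
    have hjlt : cmax.2 < n - μ.card := by omega
    have hc0 : ((0 : ℕ), n - μ.card) ∈ P :=
      mem_padded.mpr (Or.inl ⟨rfl, by omega⟩)
    have hlt := hU.row_strict cmax hcm (0, n - μ.card) hc0 (by rw [hrow0]) hjlt
    have := (hval _ hc0).2
    omega
  have : cmax = ((0 : ℕ), n - μ.card) := Prod.ext hrow0 hcol2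
  rw [← this]
  exact hcv

lemma isSYT_downdate (h2 : μ.card + μ.rowLen 0 ≤ n) {U : ℕ × ℕ → ℕ}
    (hU : IsSYT (paddedCells μ (n + 1)) U) (hcor : U (0, n - μ.card) = n + 1) :
    IsSYT (paddedCells μ n) (Function.update U (0, n - μ.card) 0) := by
  have hc : μ.card ≤ n := le_trans (Nat.le_add_right _ _) h2
  have hins := padded_succ (μ := μ) hc
  have hnm := corner_not_mem (μ := μ) (n := n)
  have hcardn := card_padded (μ := μ) hc
  have hcard1 : (paddedCells μ (n + 1)).card = n + 1 :=
    card_padded (le_trans hc (Nat.le_succ n))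
  have hsub : paddedCells μ n ⊆ paddedCells μ (n + 1) := by
    rw [hins]; exact Finset.subset_insert _ _
  have hTeq : ∀ c ∈ paddedCells μ n,
      Function.update U (0, n - μ.card) 0 c = U c := by
    intro c hc'
    have hne : c ≠ ((0 : ℕ), n - μ.card) := by
      rintro rfl; exact hnm hc'
    exact Function.update_of_ne hne _ _
  have hval : ∀ c ∈ paddedCells μ (n + 1), 1 ≤ U c ∧ U c ≤ n + 1 := by
    intro c hcm
    have := hU.bijOn.mapsTo (Finset.mem_coe.mpr hcm)
    rw [hcard1] at this
    exact this
  have hne : ∀ c ∈ paddedCells μ n, U c ≤ n := by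
    intro c hc'
    have hb := hval c (hsub hc')
    by_contra hgt
    have he : U c = n + 1 := by omega
    have : c = ((0 : ℕ), n - μ.card) := by
      apply hU.bijOn.injOn (Finset.mem_coe.mpr (hsub hc'))
      · rw [hins]; exact Finset.mem_coe.mpr (Finset.mem_insert_self _ _)
      · rw [he, hcor]
    rw [this] at hc'
    exact hnm hc' 
  constructor
  · rw [hcardn]
    refine ⟨?_, ?_, ?_⟩
    · intro c hc'
      have hc'' := Finset.mem_coe.mp hc'
      rw [hTeq c hc'']
      exact ⟨(hval c (hsub hc'')).1, hne c hc''⟩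
    · intro a ha b hb e
      have ha' := Finset.mem_coe.mp ha
      have hb' := Finset.mem_coe.mp hb
      rw [hTeq a ha', hTeq b hb'] at e
      exact hU.bijOn.injOn (Finset.mem_coe.mpr (hsub ha'))
        (Finset.mem_coe.mpr (hsub hb')) e
    · intro y hy
      rw [Set.mem_Icc] at hy
      have hy' : y ∈ Set.Icc 1 (paddedCells μ (n + 1)).card := by
        rw [hcard1]; exact ⟨hy.1, by omega⟩
      obtain ⟨c, hc', he⟩ := hU.bijOn.surjOn hy'
      have hc'' := Finset.mem_coe.mp hc'
      rw [hins, Finset.mem_insert] at hc''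
      rcases hc'' with rfl | hc''
      · exfalso; rw [hcor] at he; omega
      · exact ⟨c, Finset.mem_coe.mpr hc'', by rw [hTeq c hc'']; exact he⟩
  · intro c1 h1 c2 h2' hrow hcol
    rw [hTeq c1 h1, hTeq c2 h2']
    exact hU.row_strict c1 (hsub h1) c2 (hsub h2') hrow hcol
  · intro c1 h1 c2 h2' hcoleq hlt
    rw [hTeq c1 h1, hTeq c2 h2']
    exact hU.col_strict c1 (hsub h1) c2 (hsub h2') hcoleq hlt
  · intro c hcn
    by_cases h : c = ((0 : ℕ), n - μ.card)
    · rw [h, Function.update_self]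
    · rw [Function.update_of_ne h]
      apply hU.zeros
      rw [hins, Finset.mem_insert]
      push_neg
      exact ⟨h, hcn⟩

end Aux

/-- for `n > 2s` and `n ≥ |μ| + μ₁`, the map adding a box labeled
`n + 1` at the end of the first row is a bijection from standard Young tableaux
of shape `μ[n]` with `maj ≤ s` onto standard Young tableaux of shape `μ[n+1]`
with `maj ≤ s`. -/
theorem stmt4 (μ : YoungDiagram) (s n : ℕ) (hn1 : 2 * s < n)
    (hn2 : μ.card + μ.rowLen 0 ≤ n) :
    Set.BijOn (fun T : ℕ × ℕ → ℕ => Function.update T ((0 : ℕ), n - μ.card) (n + 1))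
      {T | IsSYT (paddedCells μ n) T ∧ majN (paddedCells μ n) T ≤ s}
      {U | IsSYT (paddedCells μ (n + 1)) U ∧ majN (paddedCells μ (n + 1)) U ≤ s} := by
  refine ⟨?_, ?_, ?_⟩
  · rintro T ⟨hT, hmaj⟩
    refine ⟨isSYT_update hn2 hT, ?_⟩
    unfold majN
    rw [descents_update hn2 hT]
    exact hmaj
  · rintro T1 ⟨hT1, _⟩ T2 ⟨hT2, _⟩ h
    funext c
    by_cases hc0 : c = ((0 : ℕ), n - μ.card)
    · rw [hc0, hT1.zeros _ corner_not_mem, hT2.zeros _ corner_not_mem]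
    · have := congrFun h c
      simp only at this
      rwa [Function.update_of_ne hc0, Function.update_of_ne hc0] at this
  · rintro U ⟨hU, hmaj⟩
    have hcor := max_at_corner hn1 hn2 hU hmaj
    have hT := isSYT_downdate hn2 hU hcor
    have hback : Function.update (Function.update U ((0 : ℕ), n - μ.card) 0)
        ((0 : ℕ), n - μ.card) (n + 1) = U := by
      rw [Function.update_idem, ← hcor, Function.update_eq_self]
    refine ⟨Function.update U ((0 : ℕ), n - μ.card) 0, ⟨hT, ?_⟩, hback⟩
    have hd := descents_update hn2 hT
    rw [hback] at hd
    unfold majN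
    rw [← hd]
    exact hmaj
end

section
/- Let k ≤ n ≤ n' be positive integers and let f : Fin n → Fin n' be an injection. Then the algebra map φ_f sends the ideal I_{n',k} ⊆ ℚ[x_1, …, x_{n'}] into the ideal I_{n,k} ⊆ ℚ[x_1, …, x_n], i.e., φ_f(I_{n',k}) ⊆ I_{n,k}. (This is the key step showing that the degree pieces of the ideals I_{n,k} form a co-FI submodule for fixed k.) -/
/-- The ideal `I_{n,k} ⊆ ℚ[x_1, …, x_n]` generated by `x_1^k, …, x_n^k` together
with the elementary symmetric polynomials `e_n, e_{n-1}, …, e_{n-k+1}`. -/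
noncomputable def Idl (n k : ℕ) : Ideal (MvPolynomial (Fin n) ℚ) :=
  Ideal.span ((Set.range fun i : Fin n => MvPolynomial.X i ^ k) ∪
    ((fun d => MvPolynomial.esymm (Fin n) ℚ d) '' {d : ℕ | n - k + 1 ≤ d ∧ d ≤ n}))

/-- For an injection `f : Fin n → Fin n'`, the ℚ-algebra homomorphism
`φ_f : ℚ[x_1, …, x_{n'}] → ℚ[x_1, …, x_n]` with `φ_f(x_j) = x_i` if `j = f i`
and `φ_f(x_j) = 0` if `j` is not in the image of `f`. -/
noncomputable def phiMap {n n' : ℕ} (f : Fin n → Fin n') :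
    MvPolynomial (Fin n') ℚ →ₐ[ℚ] MvPolynomial (Fin n) ℚ :=
  MvPolynomial.aeval fun j : Fin n' =>
    if h : ∃ i, f i = j then MvPolynomial.X h.choose else 0

open MvPolynomial Finset

lemma phiMap_X_mem {n n' : ℕ} (f : Fin n → Fin n') (hf : Function.Injective f) (i : Fin n) :
    phiMap f (X (f i)) = (X i : MvPolynomial (Fin n) ℚ) := by
  simp only [phiMap, aeval_X]
  rw [dif_pos ⟨i, rfl⟩]
  congr 1
  exact hf (Exists.choose_spec (⟨i, rfl⟩ : ∃ i', f i' = f i))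

lemma phiMap_esymm {n n' : ℕ} (f : Fin n → Fin n') (hf : Function.Injective f) (d : ℕ) :
    phiMap f (esymm (Fin n') ℚ d) = esymm (Fin n) ℚ d := by
  classical
  set fe : Fin n ↪ Fin n' := ⟨f, hf⟩
  set g : Fin n' → MvPolynomial (Fin n) ℚ := fun j =>
    if h : ∃ i, f i = j then MvPolynomial.X h.choose else 0 with hg
  have hgf : ∀ i : Fin n, g (f i) = X i := by
    intro i
    show (if h : ∃ i', f i' = f i then (X h.choose : MvPolynomial (Fin n) ℚ) else 0) = X i
    rw [dif_pos ⟨i, rfl⟩]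
    congr 1
    exact hf (Exists.choose_spec (⟨i, rfl⟩ : ∃ i', f i' = f i))
  have : phiMap f (esymm (Fin n') ℚ d)
      = ∑ t ∈ powersetCard d (univ : Finset (Fin n')), ∏ j ∈ t, g j := by
    simp [phiMap, esymm, map_sum, map_prod, hg]
  rw [this]
  have hzero : ∀ t ∈ powersetCard d (univ : Finset (Fin n')),
      t ∉ powersetCard d ((univ : Finset (Fin n)).map fe) → ∏ j ∈ t, g j = 0 := by
    intro t ht hnt
    rw [mem_powersetCard] at ht
    have hns : ¬ t ⊆ (univ : Finset (Fin n)).map fe := fun hs =>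
      hnt (mem_powersetCard.mpr ⟨hs, ht.2⟩)
    obtain ⟨j, hjt, hjm⟩ := Finset.not_subset.mp hns
    refine Finset.prod_eq_zero hjt ?_
    show (if h : ∃ i, f i = j then (X h.choose : MvPolynomial (Fin n) ℚ) else 0) = 0
    rw [dif_neg]
    rintro ⟨i, rfl⟩
    exact hjm (mem_map_of_mem _ (mem_univ i))
  have hsub : powersetCard d ((univ : Finset (Fin n)).map fe)
      ⊆ powersetCard d (univ : Finset (Fin n')) := by
    apply powersetCard_mono
    intro x _; exact mem_univ x
  rw [← Finset.sum_subset hsub hzero, Finset.powersetCard_map, Finset.sum_map]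
  rw [esymm]
  refine Finset.sum_congr rfl fun s _ => ?_
  rw [show (Finset.mapEmbedding fe).toEmbedding s = s.map fe from rfl, Finset.prod_map]
  exact Finset.prod_congr rfl fun i _ => hgf i

/-- for `1 ≤ k ≤ n ≤ n'` and an injection `f : Fin n → Fin n'`,
the map `φ_f` sends the ideal `I_{n',k}` into the ideal `I_{n,k}`. -/
theorem stmt7 (k n n' : ℕ) (hk : 1 ≤ k) (hkn : k ≤ n) (hnn' : n ≤ n')
    (f : Fin n → Fin n') (hf : Function.Injective f) :
    ∀ P ∈ Idl n' k, phiMap f P ∈ Idl n k := by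
  intro P hP
  have hmap : phiMap f P ∈ Ideal.map (phiMap f).toRingHom (Idl n' k) :=
    Ideal.mem_map_of_mem _ hP
  refine Ideal.map_le_of_le_comap ?_ hmap
  rw [Idl, Ideal.span_le]
  rintro p (⟨j, rfl⟩ | ⟨d, ⟨hd1, hd2⟩, rfl⟩)
  · -- X j ^ k
    simp only [SetLike.mem_coe, Ideal.mem_comap, AlgHom.toRingHom_eq_coe,
      RingHom.coe_coe, map_pow]
    by_cases h : ∃ i, f i = j
    · obtain ⟨i, rfl⟩ := h
      rw [phiMap_X_mem f hf i]
      exact Ideal.subset_span (Or.inl ⟨i, rfl⟩)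
    · have : phiMap f (X j) = 0 := by simp [phiMap, dif_neg h]
      rw [this, zero_pow (by omega)]
      exact Ideal.zero_mem _
  · simp only [SetLike.mem_coe, Ideal.mem_comap, AlgHom.toRingHom_eq_coe, RingHom.coe_coe]
    rw [phiMap_esymm f hf d]
    by_cases hdn : d ≤ n
    · exact Ideal.subset_span (Or.inr ⟨d, ⟨by omega, hdn⟩, rfl⟩)
    · have : esymm (Fin n) ℚ d = 0 := by
        rw [esymm, Finset.powersetCard_eq_empty.mpr (by simpa using hdn), Finset.sum_empty]
      rw [this]; exact Ideal.zero_mem _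
end

section
/- Let 0 ≤ m < n ≤ p be integers and let f : {1,…,n} → {1,…,p} be an injection. If (ℓ_1, …, ℓ_n) is an n-tuple of one-dimensional subspaces of ℂ^{n−m} with ℓ_1 + ⋯ + ℓ_n = ℂ^{n−m}, then the p-tuple ν_f(ℓ_1, …, ℓ_n) = (ℓ''_1, …, ℓ''_p) of one-dimensional subspaces of ℂ^{p−m} satisfies ℓ''_1 + ⋯ + ℓ''_p = ℂ^{p−m}. (That is, ν_f maps the space X_{n,n−m} of spanning line configurations into X_{p,p−m}.) -/
/-- The linear inclusion `ℂ^a → ℂ^b` into the first `a` coordinates. -/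
noncomputable def iotaC (a b : ℕ) : (Fin a → ℂ) →ₗ[ℂ] (Fin b → ℂ) where
  toFun v := fun j => if h : (j : ℕ) < a then v ⟨(j : ℕ), h⟩ else 0
  map_add' u v := by funext j; by_cases h : (j : ℕ) < a <;> simp [h]
  map_smul' c v := by funext j; by_cases h : (j : ℕ) < a <;> simp [h]

/-- For `j` not in the image of `f`, `missingRank f j` is the number of elements
smaller than `j` which are not in the image of `f`; so if `j` is the `t`-th
smallest missing element (`t ≥ 1`) then `missingRank f j = t - 1`. -/
def missingRank {n p : ℕ} (f : Fin n → Fin p) (j : Fin p) : ℕ :=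
  (Finset.univ.filter fun j' : Fin p => j' < j ∧ ∀ i, f i ≠ j').card

/-- The map `ν_f` on tuples of subspaces: the `j`-th entry of
`ν_f (ℓ_1, …, ℓ_n)` is `ι(ℓ_i)` if `j = f i` (with `ι : ℂ^{n-m} → ℂ^{p-m}` the
inclusion into the first coordinates), and is the line spanned by the standard
basis vector `e_{t + n - m}` if `j = i_t` is the `t`-th smallest element outside
the image of `f` (all 1-indexed in the mathematical description; here encoded
0-indexed, so the basis vector has 0-based index `(n - m) + missingRank f j`). -/
noncomputable def nu (m n p : ℕ) (f : Fin n → Fin p)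
    (L : Fin n → Submodule ℂ (Fin (n - m) → ℂ)) :
    Fin p → Submodule ℂ (Fin (p - m) → ℂ) := fun j =>
  if h : ∃ i, f i = j then (L h.choose).map (iotaC (n - m) (p - m))
  else Submodule.span ℂ
    {fun a : Fin (p - m) => if (a : ℕ) = (n - m) + missingRank f j then (1 : ℂ) else 0}

-- auxiliary lemmas

lemma iotaC_injective {a b : ℕ} (hab : a ≤ b) : Function.Injective (iotaC a b) := by
  intro u v huv
  funext i
  have hi : (i : ℕ) < b := lt_of_lt_of_le i.2 hab
  have := congrFun huv ⟨(i : ℕ), hi⟩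
  simpa [iotaC, i.2] using this

lemma cardMissing {n p : ℕ} (hnp : n ≤ p) (f : Fin n → Fin p) (hf : Function.Injective f) :
    (Finset.univ.filter fun j : Fin p => ∀ i, f i ≠ j).card = p - n := by
  classical
  have : (Finset.univ.filter fun j : Fin p => ∀ i, f i ≠ j)
      = (Finset.univ.image f)ᶜ := by
    ext j; simp [eq_comm]
  rw [this, Finset.card_compl, Finset.card_image_of_injective _ hf]
  simp

lemma missingRank_lt {n p : ℕ} (hnp : n ≤ p) (f : Fin n → Fin p) (hf : Function.Injective f)
    {j : Fin p} (hj : ∀ i, f i ≠ j) : missingRank f j < p - n := by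
  classical
  rw [← cardMissing hnp f hf]
  apply Finset.card_lt_card
  constructor
  · intro x hx
    simp only [Finset.mem_filter, Finset.mem_univ, true_and] at hx ⊢
    exact hx.2
  · intro hsub
    have := hsub (by simp [hj] : j ∈ Finset.univ.filter fun j' : Fin p => ∀ i, f i ≠ j')
    simp at this

lemma missingRank_strictMono {n p : ℕ} (f : Fin n → Fin p)
    {j₁ j₂ : Fin p} (hj₁ : ∀ i, f i ≠ j₁) (h : j₁ < j₂) :
    missingRank f j₁ < missingRank f j₂ := by
  classical
  apply Finset.card_lt_card
  constructor
  · intro x hx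
    simp only [Finset.mem_filter, Finset.mem_univ, true_and] at hx ⊢
    exact ⟨lt_trans hx.1 h, hx.2⟩
  · intro hsub
    have := hsub (by simp [hj₁, h] : j₁ ∈ Finset.univ.filter
      fun j' : Fin p => j' < j₂ ∧ ∀ i, f i ≠ j')
    simp at this

lemma missingRank_surj {n p : ℕ} (hnp : n ≤ p) (f : Fin n → Fin p) (hf : Function.Injective f)
    {t : ℕ} (ht : t < p - n) : ∃ j : Fin p, (∀ i, f i ≠ j) ∧ missingRank f j = t := by
  classical
  set S := Finset.univ.filter fun j : Fin p => ∀ i, f i ≠ j with hS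
  have hmem : ∀ j ∈ S, ∀ i, f i ≠ j := by intro j hj; simpa [hS] using hj
  have hmaps : ∀ j (hj : j ∈ S), missingRank f j ∈ Finset.range (p - n) := by
    intro j hj
    simp only [Finset.mem_range]
    exact missingRank_lt hnp f hf (hmem j hj)
  have hinj : ∀ j₁ j₂ (h₁ : j₁ ∈ S) (h₂ : j₂ ∈ S),
      missingRank f j₁ = missingRank f j₂ → j₁ = j₂ := by
    intro j₁ j₂ h₁ h₂ heq
    rcases lt_trichotomy j₁ j₂ with h | h | h
    · exact absurd heq (ne_of_lt (missingRank_strictMono f (hmem j₁ h₁) h))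
    · exact h
    · exact absurd heq.symm (ne_of_lt (missingRank_strictMono f (hmem j₂ h₂) h))
  have hcard : (Finset.range (p - n)).card ≤ S.card := by
    rw [Finset.card_range, cardMissing hnp f hf]
  obtain ⟨j, hj, hjt⟩ := Finset.surj_on_of_inj_on_of_card_le (fun j _ => missingRank f j)
    hmaps hinj hcard t (Finset.mem_range.mpr ht)
  exact ⟨j, hmem j hj, hjt.symm⟩


/-- for `0 ≤ m < n ≤ p` and an injection `f`, if
`(ℓ_1, …, ℓ_n)` is a tuple of one-dimensional subspaces of `ℂ^{n-m}` with
`ℓ_1 + ⋯ + ℓ_n = ℂ^{n-m}`, then `ν_f (ℓ_1, …, ℓ_n)` is a `p`-tuple of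
one-dimensional subspaces of `ℂ^{p-m}` with `ℓ''_1 + ⋯ + ℓ''_p = ℂ^{p-m}`. -/
theorem stmt14 (m n p : ℕ) (hm : m < n) (hnp : n ≤ p)
    (f : Fin n → Fin p) (hf : Function.Injective f)
    (L : Fin n → Submodule ℂ (Fin (n - m) → ℂ))
    (hdim : ∀ i, Module.finrank ℂ (L i) = 1)
    (hspan : ⨆ i, L i = ⊤) :
    (∀ j, Module.finrank ℂ (nu m n p f L j) = 1) ∧ (⨆ j, nu m n p f L j = ⊤) := by
  classical
  have hmn : n - m ≤ p - m := by omega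
  have hinj := iotaC_injective hmn
  constructor
  · intro j
    unfold nu
    by_cases h : ∃ i, f i = j
    · rw [dif_pos h]
      rw [← (Submodule.equivMapOfInjective _ hinj (L h.choose)).finrank_eq]
      exact hdim _
    · rw [dif_neg h]
      push_neg at h
      apply finrank_span_singleton
      intro hv
      have hlt : (n - m) + missingRank f j < p - m := by
        have := missingRank_lt hnp f hf h
        omega
      have := congrFun hv ⟨(n - m) + missingRank f j, hlt⟩
      simp at this
  · rw [eq_top_iff, ← (Pi.basisFun ℂ (Fin (p - m))).span_eq, Submodule.span_le]
    rintro _ ⟨k, rfl⟩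
    rw [Pi.basisFun_apply]
    by_cases hk : (k : ℕ) < n - m
    · -- e_k = iotaC (e'_k), and e'_k ∈ ⊤ = ⨆ L i
      set k' : Fin (n - m) := ⟨(k : ℕ), hk⟩
      have h1 : (Pi.single k 1 : Fin (p - m) → ℂ) = iotaC (n - m) (p - m) (Pi.single k' 1) := by
        funext a
        by_cases ha : (a : ℕ) < n - m
        · simp only [iotaC, LinearMap.coe_mk, AddHom.coe_mk, dif_pos ha]
          rw [Pi.single_apply, Pi.single_apply]
          simp [Fin.ext_iff, k']
        · simp only [iotaC, LinearMap.coe_mk, AddHom.coe_mk, dif_neg ha]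
          rw [Pi.single_apply]
          have : a ≠ k := by intro h; apply ha; rw [h]; exact hk
          simp [this]
      rw [h1]
      have h2 : (Pi.single k' 1 : Fin (n - m) → ℂ) ∈ ⨆ i, L i := by
        rw [hspan]; trivial
      have h3 : iotaC (n - m) (p - m) (Pi.single k' 1) ∈
          (⨆ i, L i).map (iotaC (n - m) (p - m)) := Submodule.mem_map_of_mem h2
      rw [Submodule.map_iSup] at h3
      have h4 : (⨆ i, (L i).map (iotaC (n - m) (p - m))) ≤ ⨆ j, nu m n p f L j := by
        apply iSup_le
        intro i
        have he : nu m n p f L (f i) = (L i).map (iotaC (n - m) (p - m)) := by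
          unfold nu
          rw [dif_pos ⟨i, rfl⟩]
          have := (⟨i, rfl⟩ : ∃ i', f i' = f i).choose_spec
          rw [hf this]
        rw [← he]
        exact le_iSup (nu m n p f L) (f i)
      exact h4 h3
    · -- k ≥ n - m : use missing element
      have ht : (k : ℕ) - (n - m) < p - n := by have := k.2; omega
      obtain ⟨j, hj, hjt⟩ := missingRank_surj hnp f hf ht
      have hmem : (Pi.single k 1 : Fin (p - m) → ℂ) ∈ nu m n p f L j := by
        unfold nu
        rw [dif_neg (by push_neg; exact fun i => hj i)]
        have : (fun a : Fin (p - m) => if (a : ℕ) = (n - m) + missingRank f j then (1 : ℂ) else 0)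
            = Pi.single k 1 := by
          funext a
          rw [Pi.single_apply, hjt]
          have : ((a : ℕ) = (n - m) + ((k : ℕ) - (n - m))) ↔ a = k := by
            rw [Fin.ext_iff]; omega
          simp [this]
        rw [← this]
        exact Submodule.mem_span_singleton_self _
      exact le_iSup (nu m n p f L) j hmem
end

section
/- Let n ≥ 1 and 0 ≤ k ≤ n−1 be integers. Then, in S(n+1) = ℚ[x_1,…,x_{n+1}] ⊗ Λ(θ_1,…,θ_{n+1}), applying the composition of partial derivatives (∂/∂x_1)(∂/∂x_2)⋯(∂/∂x_n) (acting on the polynomial tensor factor, identity on the exterior factor) to the superspace Vandermonde δ_{n+1, n−k+1} yields (n−k)^k · (n−k)! · Ψ(δ_{n,n−k}), where Ψ : S(n) → S(n+1) is the inclusion induced by the standard coordinate inclusion of {1,…,n} into {1,…,n+1} on both tensor factors. -/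
open scoped TensorProduct

set_option synthInstance.maxHeartbeats 1000000
set_option maxHeartbeats 1000000

-- arithmetic
lemma prod_min_aux (a k : ℕ) :
    ∏ j ∈ Finset.range (a + k), min a (j + 1) = a ^ k * a.factorial := by
  induction k with
  | zero =>
    simp only [Nat.add_zero, pow_zero, one_mul]
    rw [← Finset.prod_range_add_one_eq_factorial]
    exact Finset.prod_congr rfl fun j hj => min_eq_right (by
      have := Finset.mem_range.mp hj; omega)
  | succ k ih =>
    rw [← Nat.add_assoc, Finset.prod_range_succ, ih, min_eq_left (by omega)]
    ring

lemma prod_min_reflect (n a k : ℕ) (hn : n = a + k) :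
    ∏ j : Fin n, min a (n - (j : ℕ)) = a ^ k * a.factorial := by
  rw [Fin.prod_univ_eq_prod_range (fun j => min a (n - j)) n]
  calc ∏ j ∈ Finset.range n, min a (n - j)
      = ∏ j ∈ Finset.range n, min a (n - 1 - j + 1) :=
        Finset.prod_congr rfl fun j hj => by
          have := Finset.mem_range.mp hj; congr 1; omega
    _ = ∏ j ∈ Finset.range n, min a (j + 1) :=
        Finset.prod_range_reflect (fun j => min a (j + 1)) n
    _ = a ^ k * a.factorial := by rw [hn]; exact prod_min_aux a k

-- derivative of a monomial along a nodup list of variables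
lemma list_pderiv_monomial {m : ℕ} (l : List (Fin m)) (hl : l.Nodup) (d : Fin m →₀ ℕ) :
    (l.map fun i => (MvPolynomial.pderiv (R := ℚ) i).toLinearMap).prod
        (MvPolynomial.monomial d (1 : ℚ))
      = ((l.map fun i => (d i : ℚ)).prod) •
        MvPolynomial.monomial (d - (l.map fun i => Finsupp.single i 1).sum) (1 : ℚ) := by
  induction l with
  | nil => simp
  | cons a l ih =>
    have hal : a ∉ l := (List.nodup_cons.mp hl).1
    have hl' : l.Nodup := (List.nodup_cons.mp hl).2
    have hS : ((l.map fun i => Finsupp.single i (1 : ℕ)).sum) a = 0 := by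
      rw [← Finsupp.applyAddHom_apply, map_list_sum]
      refine List.sum_eq_zero fun x hx => ?_
      simp only [List.map_map, List.mem_map, Function.comp] at hx
      obtain ⟨i, hi, rfl⟩ := hx
      have : i ≠ a := fun h => hal (h ▸ hi)
      simp [Finsupp.applyAddHom_apply, Finsupp.single_apply, this]
    simp only [List.map_cons, List.prod_cons, List.sum_cons, Module.End.mul_apply, ih hl']
    rw [map_smul, Derivation.coeFn_coe, MvPolynomial.pderiv_monomial, Finsupp.tsub_apply, hS,
      Nat.sub_zero, one_mul, tsub_tsub, add_comm ((l.map fun i => Finsupp.single i (1:ℕ)).sum),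
      mul_comm, mul_smul]
    congr 1
    rw [MvPolynomial.smul_monomial, smul_eq_mul, mul_one]

lemma rTensor_list_prod {P Q : Type*} [AddCommGroup P] [AddCommGroup Q]
    [Module ℚ P] [Module ℚ Q] (l : List (Module.End ℚ P)) :
    (l.map (LinearMap.rTensor Q)).prod = LinearMap.rTensor Q l.prod := by
  induction l with
  | nil => simp only [List.map_nil, List.prod_nil]; exact (LinearMap.rTensor_id Q P).symm
  | cons a l ih =>
    simp only [List.map_cons, List.prod_cons, ih]
    rw [Module.End.mul_eq_comp, Module.End.mul_eq_comp, LinearMap.rTensor_comp]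

lemma ofFn_if_prod {M : Type*} [Monoid M] (k : ℕ) :
    ∀ {m : ℕ} (f : Fin m → M) (h : k ≤ m),
    (List.ofFn fun t : Fin m => if (t : ℕ) < k then f t else 1).prod
      = (List.ofFn fun t : Fin k => f (Fin.castLE h t)).prod := by
  intro m
  induction m with
  | zero =>
    intro f h
    have : k = 0 := Nat.le_zero.mp h
    subst this; simp
  | succ m ih =>
    intro f h
    rcases Nat.lt_or_ge k (m + 1) with hk | hk
    · have hk' : k ≤ m := by omega
      rw [List.ofFn_succ']
      simp only [List.concat_eq_append, List.prod_append, List.prod_cons, List.prod_nil,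
        Fin.coe_castSucc, Fin.val_last]
      rw [if_neg (by omega), mul_one, ih (fun t => f t.castSucc) hk', mul_one]
      exact congrArg List.prod (congrArg List.ofFn (funext fun t => congrArg f (Fin.ext rfl)))
    · have hkm : k = m + 1 := le_antisymm h hk
      subst hkm
      simp only [Fin.is_lt, if_true]
      congr 1

def finLastEquiv (n : ℕ) : Fin n ≃ {j : Fin (n + 1) // (j : ℕ) < n} where
  toFun i := ⟨i.castSucc, i.isLt⟩
  invFun j := ⟨(j : Fin (n + 1)).val, j.2⟩
  left_inv i := Fin.ext rfl
  right_inv j := Subtype.ext (Fin.ext rfl)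

noncomputable def permExt (n : ℕ) (σ : Equiv.Perm (Fin n)) : Equiv.Perm (Fin (n + 1)) :=
  σ.extendDomain (finLastEquiv n)

lemma permExt_castSucc (n : ℕ) (σ : Equiv.Perm (Fin n)) (i : Fin n) :
    permExt n σ i.castSucc = (σ i).castSucc := by
  have h : ((i.castSucc : Fin (n + 1)) : ℕ) < n := i.isLt
  rw [permExt, Equiv.Perm.extendDomain_apply_subtype σ (finLastEquiv n) h]
  rfl

lemma permExt_last (n : ℕ) (σ : Equiv.Perm (Fin n)) :
    permExt n σ (Fin.last n) = Fin.last n := by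
  rw [permExt, Equiv.Perm.extendDomain_apply_not_subtype σ (finLastEquiv n) (by simp)]

lemma permExt_symm (n : ℕ) (σ : Equiv.Perm (Fin n)) :
    (permExt n σ).symm = permExt n σ.symm := by
  exact Equiv.Perm.extendDomain_symm (e := σ) (f := finLastEquiv n)

lemma permExt_sign (n : ℕ) (σ : Equiv.Perm (Fin n)) :
    Equiv.Perm.sign (permExt n σ) = Equiv.Perm.sign σ :=
  Equiv.Perm.sign_extendDomain σ (finLastEquiv n)

lemma permExt_injective (n : ℕ) : Function.Injective (permExt n) := by
  intro σ τ h
  ext i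
  have := congrArg (fun w : Equiv.Perm (Fin (n + 1)) => w i.castSucc) h
  simp only [permExt_castSucc] at this
  exact congrArg Fin.val (Fin.castSucc_injective n this)

lemma exists_permExt (n : ℕ) (w : Equiv.Perm (Fin (n + 1)))
    (hw : w (Fin.last n) = Fin.last n) : ∃ σ, permExt n σ = w := by
  have hfix : ∀ j : Fin (n + 1), w j = Fin.last n ↔ j = Fin.last n := by
    intro j
    constructor
    · intro h; exact w.injective (h.trans hw.symm)
    · intro h; rw [h, hw]
  have hp : ∀ j : Fin (n + 1), ((j : ℕ) < n ↔ ((w j : ℕ) < n)) := by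
    intro j
    have h1 : (j : ℕ) < n ↔ j ≠ Fin.last n := by
      constructor
      · intro h hj; rw [hj] at h; simp at h
      · intro h; have := j.isLt; rcases Nat.lt_or_ge (j : ℕ) n with h' | h'
        · exact h'
        · exact absurd (Fin.ext (by omega : (j : ℕ) = n)) h
    have h2 : ((w j : ℕ) < n) ↔ w j ≠ Fin.last n := by
      constructor
      · intro h hj; rw [hj] at h; simp at h
      · intro h; have := (w j).isLt; rcases Nat.lt_or_ge ((w j) : ℕ) n with h' | h'
        · exact h'
        · exact absurd (Fin.ext (by omega : ((w j) : ℕ) = n)) h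
    rw [h1, h2, not_iff_not.symm, not_not, not_not, hfix]
  refine ⟨((finLastEquiv n).symm.permCongr
    (w.subtypePerm fun j => (hp j).symm)), ?_⟩
  ext j
  rcases Nat.lt_or_ge (j : ℕ) n with h | h
  · have hj : j = Fin.castSucc ⟨(j : ℕ), h⟩ := Fin.ext rfl
    rw [hj, permExt_castSucc]
    simp only [Equiv.permCongr_apply, Equiv.symm_symm]
    rfl
  · have hj : j = Fin.last n := Fin.ext (by have := j.isLt; simp only [Fin.val_last]; omega)
    rw [hj, permExt_last, hw]


/-- Superspace `S(n) = ℚ[x_1, …, x_n] ⊗ Λ(θ_1, …, θ_n)`. -/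
noncomputable abbrev Ssp (n : ℕ) : Type :=
  MvPolynomial (Fin n) ℚ ⊗[ℚ] ExteriorAlgebra ℚ (Fin n → ℚ)

/-- The anticommuting generator `θ_i`, the image of the `i`-th standard basis
vector of `ℚ^n` in the exterior algebra. -/
noncomputable def theta (n : ℕ) (i : Fin n) : ExteriorAlgebra ℚ (Fin n → ℚ) :=
  ExteriorAlgebra.ι ℚ (Pi.single i 1)

/-- The superspace Vandermonde `δ_{n,K} = Σ_{w ∈ S_n} sign(w) ·
w·(x_1^{a_1} ⋯ x_n^{a_n} ⊗ θ_1 ⋯ θ_r)`, where `r = n - K` and (1-indexed)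
`a_i = min (K-1) (n-i)`.  Here `w` acts by `x_i ↦ x_{w i}`, `θ_i ↦ θ_{w i}`, so
the summand is the monomial with exponent `min (K-1) (n-1-(w⁻¹ j))` on `x_j`
(0-indexed) tensored with the ordered product `θ_{w 0} θ_{w 1} ⋯ θ_{w (r-1)}`. -/
noncomputable def sVandermonde (n K : ℕ) : Ssp n :=
  ∑ w : Equiv.Perm (Fin n),
    (((Equiv.Perm.sign w : ℤ) : ℚ)) •
      ((MvPolynomial.monomial
          (Finsupp.equivFunOnFinite.symm
            fun j : Fin n => min (K - 1) (n - 1 - ((w.symm j : ℕ)))) (1 : ℚ)) ⊗ₜ[ℚ]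
        (List.ofFn fun t : Fin n =>
          if (t : ℕ) < n - K then theta n (w t) else 1).prod)

/-- The partial derivative `∂/∂x_i` acting on superspace: the usual partial
derivative on the polynomial factor, the identity on the exterior factor. -/
noncomputable def pderivT (n : ℕ) (i : Fin n) : Module.End ℚ (Ssp n) :=
  LinearMap.rTensor (ExteriorAlgebra ℚ (Fin n → ℚ))
    (MvPolynomial.pderiv i).toLinearMap

/-- The composite `(∂/∂x_1)(∂/∂x_2)⋯(∂/∂x_n)` acting on `S(n+1)`. -/
noncomputable def Dop (n : ℕ) : Module.End ℚ (Ssp (n + 1)) :=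
  (List.ofFn fun i : Fin n => pderivT (n + 1) i.castSucc).prod

/-- The linear inclusion `ℚ^n → ℚ^{n+1}` into the first `n` coordinates. -/
noncomputable def iotaQ (n : ℕ) : (Fin n → ℚ) →ₗ[ℚ] (Fin (n + 1) → ℚ) where
  toFun v := fun j => if h : (j : ℕ) < n then v ⟨(j : ℕ), h⟩ else 0
  map_add' u v := by funext j; by_cases h : (j : ℕ) < n <;> simp [h]
  map_smul' c v := by funext j; by_cases h : (j : ℕ) < n <;> simp [h]

/-- The inclusion of exterior algebras `Λ(θ_1, …, θ_n) → Λ(θ_1, …, θ_{n+1})`,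
`θ_i ↦ θ_i`. -/
noncomputable def extInc (n : ℕ) :
    ExteriorAlgebra ℚ (Fin n → ℚ) →ₐ[ℚ] ExteriorAlgebra ℚ (Fin (n + 1) → ℚ) :=
  ExteriorAlgebra.lift ℚ
    ⟨(ExteriorAlgebra.ι ℚ).comp (iotaQ n), fun v => ExteriorAlgebra.ι_sq_zero _⟩

/-- The inclusion `Ψ : S(n) → S(n+1)`, `x_i ↦ x_i` and `θ_i ↦ θ_i`. -/
noncomputable def Psi (n : ℕ) : Ssp n →ₗ[ℚ] Ssp (n + 1) :=
  TensorProduct.map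
    (MvPolynomial.rename (Fin.castSucc : Fin n → Fin (n + 1)) :
      MvPolynomial (Fin n) ℚ →ₐ[ℚ] MvPolynomial (Fin (n + 1)) ℚ).toLinearMap
    (extInc n).toLinearMap


section Aux

lemma iotaQ_single (n : ℕ) (i : Fin n) :
    iotaQ n (Pi.single i (1 : ℚ)) = Pi.single i.castSucc (1 : ℚ) := by
  funext j
  simp only [iotaQ, LinearMap.coe_mk, AddHom.coe_mk]
  by_cases h : (j : ℕ) < n
  · rw [dif_pos h]
    by_cases hji : j = i.castSucc
    · have : (⟨(j : ℕ), h⟩ : Fin n) = i := Fin.ext (by have := congrArg Fin.val hji; simpa using this)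
      rw [this, hji, Pi.single_eq_same, Pi.single_eq_same]
    · have : (⟨(j : ℕ), h⟩ : Fin n) ≠ i := fun hc => hji (by
        apply Fin.ext
        have := congrArg Fin.val hc
        simpa using this)
      rw [Pi.single_eq_of_ne this, Pi.single_eq_of_ne hji]
  · rw [dif_neg h]
    have : j ≠ i.castSucc := fun hc => h (by rw [hc]; exact i.isLt)
    rw [Pi.single_eq_of_ne this]

lemma extInc_theta (n : ℕ) (i : Fin n) :
    extInc n (theta n i) = theta (n + 1) i.castSucc := by
  rw [theta, theta, extInc, ExteriorAlgebra.lift_ι_apply]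
  show ExteriorAlgebra.ι ℚ (iotaQ n (Pi.single i 1)) = _
  rw [iotaQ_single]

lemma S_apply_castSucc (n : ℕ) (j : Fin n) :
    (∑ i : Fin n, Finsupp.single (Fin.castSucc i) (1 : ℕ)) (Fin.castSucc j) = 1 := by
  rw [Finsupp.finset_sum_apply]
  rw [Finset.sum_eq_single j]
  · rw [Finsupp.single_eq_same]
  · intro b _ hb
    exact Finsupp.single_eq_of_ne' (fun hc => hb (Fin.castSucc_injective n hc))
  · intro h; exact absurd (Finset.mem_univ j) h

lemma S_apply_last (n : ℕ) :
    (∑ i : Fin n, Finsupp.single (Fin.castSucc i) (1 : ℕ)) (Fin.last n) = 0 := by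
  rw [Finsupp.finset_sum_apply]
  refine Finset.sum_eq_zero fun i _ => ?_
  exact Finsupp.single_eq_of_ne' (Fin.castSucc_lt_last i).ne

lemma Dop_monomial (n : ℕ) (d : Fin (n + 1) →₀ ℕ) (e : ExteriorAlgebra ℚ (Fin (n + 1) → ℚ)) :
    Dop n ((MvPolynomial.monomial d (1 : ℚ)) ⊗ₜ[ℚ] e)
      = (∏ i : Fin n, ((d i.castSucc : ℕ) : ℚ)) •
        ((MvPolynomial.monomial (d - ∑ i : Fin n, Finsupp.single i.castSucc 1) (1 : ℚ)) ⊗ₜ[ℚ] e) := by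
  have h1 : Dop n = LinearMap.rTensor (ExteriorAlgebra ℚ (Fin (n + 1) → ℚ))
      ((List.ofFn fun i : Fin n =>
        (MvPolynomial.pderiv (R := ℚ) i.castSucc).toLinearMap)).prod := by
    rw [Dop, ← rTensor_list_prod, List.map_ofFn]
    rfl
  have hnodup : (List.ofFn fun i : Fin n => (i.castSucc : Fin (n + 1))).Nodup :=
    List.nodup_ofFn.mpr (Fin.castSucc_injective n)
  have h2 := list_pderiv_monomial (List.ofFn fun i : Fin n => (i.castSucc : Fin (n + 1)))
    hnodup d
  rw [h1, LinearMap.rTensor_tmul]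
  rw [List.map_ofFn, List.map_ofFn, List.map_ofFn] at h2
  rw [show ((List.ofFn fun i : Fin n =>
        (MvPolynomial.pderiv (R := ℚ) i.castSucc).toLinearMap)) =
      (List.ofFn ((fun i => (MvPolynomial.pderiv (R := ℚ) i).toLinearMap) ∘
        (fun i : Fin n => i.castSucc))) from rfl, h2]
  rw [List.prod_ofFn, List.sum_ofFn]
  rw [TensorProduct.smul_tmul']
  rfl

lemma theta_prod_permExt (n k : ℕ) (hk : k ≤ n) (σ : Equiv.Perm (Fin n)) :
    (List.ofFn fun t : Fin (n + 1) =>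
        if (t : ℕ) < k then theta (n + 1) (permExt n σ t) else 1).prod
      = extInc n (List.ofFn fun t : Fin n =>
          if (t : ℕ) < k then theta n (σ t) else 1).prod := by
  rw [map_list_prod, List.map_ofFn]
  rw [ofFn_if_prod k _ (Nat.le_succ_of_le hk)]
  have hcomp : (⇑(extInc n) ∘ fun t : Fin n => if (t : ℕ) < k then theta n (σ t) else 1)
      = fun t : Fin n => if (t : ℕ) < k then extInc n (theta n (σ t)) else 1 :=
    funext fun t => by by_cases h : (t : ℕ) < k <;> simp [h]
  rw [hcomp]
  rw [ofFn_if_prod k _ hk]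
  refine congrArg List.prod (congrArg List.ofFn (funext fun t => ?_))
  have h1 : (Fin.castLE (Nat.le_succ_of_le hk) t) = Fin.castSucc (Fin.castLE hk t) :=
    Fin.ext rfl
  rw [h1, permExt_castSucc, extInc_theta]

end Aux
/-- for `n ≥ 1` and `0 ≤ k ≤ n - 1`, in `S(n+1)` we have
`(∂/∂x_1)(∂/∂x_2)⋯(∂/∂x_n) δ_{n+1, n-k+1} = (n-k)^k · (n-k)! · Ψ(δ_{n, n-k})`. -/
theorem stmt16 (n k : ℕ) (hn : 1 ≤ n) (hk : k ≤ n - 1) :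
    Dop n (sVandermonde (n + 1) (n - k + 1)) =
      (((n - k) ^ k * Nat.factorial (n - k) : ℕ) : ℚ) •
        Psi n (sVandermonde n (n - k)) := by
  classical
  have hkn : k ≤ n := by omega
  have hnk1 : 1 ≤ n - k := by omega
  have e1 : n + 1 - (n - k + 1) = k := by omega
  have e2 : n - (n - k) = k := by omega
  have e3 : n - k + 1 - 1 = n - k := by omega
  have e4 : n + 1 - 1 = n := by omega
  rw [sVandermonde, sVandermonde, map_sum, map_sum, Finset.smul_sum]
  simp only [map_smul, e1, e2, e3, e4]
  have hvan : ∀ w ∈ (Finset.univ : Finset (Equiv.Perm (Fin (n + 1)))),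
      ((((Equiv.Perm.sign w : ℤ) : ℚ)) • Dop n
        ((MvPolynomial.monomial (Finsupp.equivFunOnFinite.symm
            fun j : Fin (n + 1) => min (n - k) (n - ((w.symm j : ℕ)))) (1 : ℚ)) ⊗ₜ[ℚ]
          (List.ofFn fun t : Fin (n + 1) =>
            if (t : ℕ) < k then theta (n + 1) (w t) else 1).prod) ≠ 0)
      → w (Fin.last n) = Fin.last n := by
    intro w _ hne
    by_contra hlast
    apply hne
    rw [Dop_monomial]
    have hval : ((w (Fin.last n)) : ℕ) < n := by
      rcases Nat.lt_or_ge ((w (Fin.last n)) : ℕ) n with h | h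
      · exact h
      · exact absurd (Fin.ext (by
          simp only [Fin.val_last]
          have := (w (Fin.last n)).isLt
          omega)) hlast
    have hi0 : Fin.castSucc (⟨((w (Fin.last n)) : ℕ), hval⟩ : Fin n) = w (Fin.last n) :=
      Fin.ext rfl
    have hzero : (∏ i : Fin n, (((Finsupp.equivFunOnFinite.symm
        fun j : Fin (n + 1) => min (n - k) (n - ((w.symm j : ℕ)))) i.castSucc : ℕ) : ℚ)) = 0 := by
      refine Finset.prod_eq_zero (Finset.mem_univ (⟨((w (Fin.last n)) : ℕ), hval⟩ : Fin n)) ?_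
      rw [hi0]
      simp only [Finsupp.coe_equivFunOnFinite_symm, Equiv.symm_apply_apply,
        Fin.val_last, Nat.sub_self, Nat.min_zero, Nat.cast_zero]
    rw [hzero, zero_smul, smul_zero]
  have key : ∀ σ : Equiv.Perm (Fin n),
      (((n - k) ^ k * Nat.factorial (n - k) : ℕ) : ℚ) •
        (((Equiv.Perm.sign σ : ℤ) : ℚ)) •
          Psi n ((MvPolynomial.monomial (Finsupp.equivFunOnFinite.symm
              fun j : Fin n => min (n - k - 1) (n - 1 - ((σ.symm j : ℕ)))) (1 : ℚ)) ⊗ₜ[ℚ]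
            (List.ofFn fun t : Fin n => if (t : ℕ) < k then theta n (σ t) else 1).prod)
      = (((Equiv.Perm.sign (permExt n σ) : ℤ) : ℚ)) • Dop n
          ((MvPolynomial.monomial (Finsupp.equivFunOnFinite.symm
              fun j : Fin (n + 1) =>
                min (n - k) (n - (((permExt n σ).symm j : ℕ)))) (1 : ℚ)) ⊗ₜ[ℚ]
            (List.ofFn fun t : Fin (n + 1) =>
              if (t : ℕ) < k then theta (n + 1) (permExt n σ t) else 1).prod) := by
    intro σ
    rw [Dop_monomial, permExt_sign, theta_prod_permExt n k hkn σ]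
    have hcoef : (∏ i : Fin n, (((Finsupp.equivFunOnFinite.symm
        fun j : Fin (n + 1) => min (n - k) (n - (((permExt n σ).symm j : ℕ)))) i.castSucc : ℕ) : ℚ))
        = (((n - k) ^ k * Nat.factorial (n - k) : ℕ) : ℚ) := by
      rw [← Nat.cast_prod]
      congr 1
      calc ∏ i : Fin n, (Finsupp.equivFunOnFinite.symm
            fun j : Fin (n + 1) =>
              min (n - k) (n - (((permExt n σ).symm j : ℕ)))) i.castSucc
          = ∏ i : Fin n, min (n - k) (n - ((σ.symm i : ℕ))) := by
            refine Finset.prod_congr rfl fun i _ => ?_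
            simp only [Finsupp.coe_equivFunOnFinite_symm]
            rw [permExt_symm, permExt_castSucc]
            rfl
        _ = ∏ j : Fin n, min (n - k) (n - (j : ℕ)) :=
            Equiv.prod_comp σ.symm (fun j : Fin n => min (n - k) (n - (j : ℕ)))
        _ = (n - k) ^ k * Nat.factorial (n - k) := prod_min_reflect n (n - k) k (by omega)
    have hexp : (Finsupp.equivFunOnFinite.symm
          fun j : Fin (n + 1) => min (n - k) (n - (((permExt n σ).symm j : ℕ))))
          - (∑ i : Fin n, Finsupp.single i.castSucc 1)
        = Finsupp.mapDomain Fin.castSucc (Finsupp.equivFunOnFinite.symm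
            fun j : Fin n => min (n - k - 1) (n - 1 - ((σ.symm j : ℕ)))) := by
      ext j
      rw [Finsupp.tsub_apply]
      induction j using Fin.lastCases with
      | last =>
        rw [S_apply_last, Finsupp.mapDomain_notin_range _ _ (by
          rintro ⟨i, hi⟩
          exact (Fin.castSucc_lt_last i).ne hi)]
        simp only [Finsupp.coe_equivFunOnFinite_symm, permExt_symm, permExt_last,
          Fin.val_last, Nat.sub_self, Nat.min_zero]
      | cast j =>
        rw [S_apply_castSucc, Finsupp.mapDomain_apply (Fin.castSucc_injective n)]
        simp only [Finsupp.coe_equivFunOnFinite_symm, permExt_symm, permExt_castSucc,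
          Fin.coe_castSucc]
        have hlt : ((σ.symm j : ℕ)) < n := (σ.symm j).isLt
        omega
    rw [Psi, TensorProduct.map_tmul, AlgHom.toLinearMap_apply, MvPolynomial.rename_monomial,
      hcoef, hexp]
    rw [smul_comm]
    rfl
  rw [← Finset.sum_filter_of_ne hvan]
  refine (Finset.sum_nbij' (permExt n)
    (fun w => if h : ∃ σ, permExt n σ = w then h.choose else 1) ?_ ?_ ?_ ?_ ?_).symm
  · intro σ _
    exact Finset.mem_filter.mpr ⟨Finset.mem_univ _, permExt_last n σ⟩
  · intro w _
    exact Finset.mem_univ _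
  · intro σ _
    have hex : ∃ τ, permExt n τ = permExt n σ := ⟨σ, rfl⟩
    beta_reduce
    rw [dif_pos hex]
    exact permExt_injective n hex.choose_spec
  · intro w hw
    have hw' : w (Fin.last n) = Fin.last n := (Finset.mem_filter.mp hw).2
    have hex := exists_permExt n w hw'
    beta_reduce
    rw [dif_pos hex]
    exact hex.choose_spec
  · intro σ _
    exact key σ
end
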